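/- arXiv:1505.02995 — 4 statements merged into one kernel-verified Lean document; each statement's English description precedes it below -/
import Mathlib

section
/- Let f, g, h ∈ L¹_loc(ℝ₊). Then for almost every (t,s) ∈ (0,∞)², (g⁺ *₂ (f⊗h))(t,s) = (h * (f*g)_t)(s) − (f_t * (h*g))(s); explicitly, ∫₀^t ∫₀^s g(t+s−r₁−r₂) f(r₁) h(r₂) dr₂ dr₁ = ∫₀^s h(s−r)·(f*g)(t+r) dr − ∫₀^s f(t+s−r)·(h*g)(r) dr. -/
open MeasureTheory Filter Set Topology

noncomputable section

/-- Convolution on `ℝ₊`: `(f*g)(t) = ∫₀^t f(t−s)g(s) ds`. -/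
def conv (f g : ℝ → ℝ) (t : ℝ) : ℝ := ∫ s in (0:ℝ)..t, f (t - s) * g s

namespace GplusAux

open scoped ENNReal

lemma mp_sub_left (a : ℝ) : MeasurePreserving (fun t : ℝ => a - t) volume volume := by
  simp_rw [sub_eq_add_neg]
  exact (measurePreserving_add_left volume a).comp (Measure.measurePreserving_neg _)

lemma ae_ne_zero : ∀ᵐ u : ℝ, u ≠ 0 := by
  have : (volume : Measure ℝ) {(0:ℝ)} = 0 := measure_singleton 0
  filter_upwards [measure_eq_zero_iff_ae_notMem.mp this] with u hu
  simpa using hu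

/-- A measurable `ℝ≥0∞`-valued function vanishing on negatives with finite
integral on `[0,M]` for every `M`. -/
structure Good (φ : ℝ → ℝ≥0∞) : Prop where
  meas : Measurable φ
  supp : ∀ x < (0:ℝ), φ x = 0
  locfin : ∀ M : ℝ, ∫⁻ x in Icc (0:ℝ) M, φ x ≠ ⊤

/-- convolution of `ℝ≥0∞`-valued functions -/
def nnconv (φ ψ : ℝ → ℝ≥0∞) (c : ℝ) : ℝ≥0∞ := ∫⁻ x, φ x * ψ (c - x)

lemma nnconv_meas {φ ψ : ℝ → ℝ≥0∞} (hφ : Measurable φ) (hψ : Measurable ψ) :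
    Measurable (nnconv φ ψ) := by
  have : Measurable fun p : ℝ × ℝ => φ p.2 * ψ (p.1 - p.2) :=
    (hφ.comp measurable_snd).mul (hψ.comp (measurable_fst.sub measurable_snd))
  exact this.lintegral_prod_right'

lemma Good.nnconv {φ ψ : ℝ → ℝ≥0∞} (hφ : Good φ) (hψ : Good ψ) : Good (GplusAux.nnconv φ ψ) := by
  constructor
  · exact nnconv_meas hφ.meas hψ.meas
  · intro c hc
    have : ∀ x : ℝ, φ x * ψ (c - x) = 0 := by
      intro x
      rcases lt_or_ge x 0 with hx | hx
      · simp [hφ.supp x hx]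
      · have : c - x < 0 := by linarith
        simp [hψ.supp _ this]
    simp [GplusAux.nnconv, this]
  · intro M
    set φM : ℝ → ℝ≥0∞ := (Icc (0:ℝ) M).indicator φ with hφM
    set ψM : ℝ → ℝ≥0∞ := (Icc (0:ℝ) M).indicator ψ with hψM
    have hφMm : Measurable φM := hφ.meas.indicator measurableSet_Icc
    have hψMm : Measurable ψM := hψ.meas.indicator measurableSet_Icc
    have key : ∀ c ∈ Icc (0:ℝ) M, ∀ x : ℝ, φ x * ψ (c - x) ≤ φM x * ψM (c - x) := by
      intro c hc x
      rcases lt_or_ge x 0 with hx0 | hx0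
      · simp [hφ.supp x hx0]
      rcases lt_or_ge M x with hxM | hxM
      · have : c - x < 0 := by have := hc.2; linarith
        simp [hψ.supp _ this]
      · have hxmem : x ∈ Icc (0:ℝ) M := ⟨hx0, hxM⟩
        rw [hφM, indicator_of_mem hxmem]
        rcases lt_or_ge (c - x) 0 with hcx | hcx
        · simp [hψ.supp _ hcx]
        · have hcxmem : c - x ∈ Icc (0:ℝ) M := ⟨hcx, by have := hc.2; linarith⟩
          rw [hψM, indicator_of_mem hcxmem]
    have hbound : (∫⁻ c in Icc (0:ℝ) M, GplusAux.nnconv φ ψ c)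
        ≤ (∫⁻ x in Icc (0:ℝ) M, φ x) * ∫⁻ x in Icc (0:ℝ) M, ψ x := by
      have h1 : (∫⁻ c in Icc (0:ℝ) M, GplusAux.nnconv φ ψ c)
          ≤ ∫⁻ c in Icc (0:ℝ) M, ∫⁻ x, φM x * ψM (c - x) := by
        refine lintegral_mono_ae ?_
        filter_upwards [ae_restrict_mem measurableSet_Icc] with c hc
        exact lintegral_mono fun x => key c hc x
      have h2 : (∫⁻ c in Icc (0:ℝ) M, ∫⁻ x, φM x * ψM (c - x))
          ≤ ∫⁻ c, ∫⁻ x, φM x * ψM (c - x) := setLIntegral_le_lintegral _ _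
      have hmeas2 : AEMeasurable (Function.uncurry fun c x => φM x * ψM (c - x))
          ((volume : Measure ℝ).prod volume) := by
        apply Measurable.aemeasurable
        exact (hφMm.comp measurable_snd).mul (hψMm.comp (measurable_fst.sub measurable_snd))
      have h3 : (∫⁻ c, ∫⁻ x, φM x * ψM (c - x))
          = ∫⁻ x, ∫⁻ c, φM x * ψM (c - x) := lintegral_lintegral_swap hmeas2
      have h4 : (∫⁻ x, ∫⁻ c, φM x * ψM (c - x))
          = ∫⁻ x, φM x * ∫⁻ c, ψM (c - x) := by
        congr 1; funext x
        exact lintegral_const_mul _ (hψMm.comp (measurable_id.sub measurable_const))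
      have h5 : (∫⁻ x, φM x * ∫⁻ c, ψM (c - x)) = ∫⁻ x, φM x * ∫⁻ c, ψM c := by
        congr 1; funext x
        rw [lintegral_sub_right_eq_self ψM x]
      have h6 : (∫⁻ x, φM x * ∫⁻ c, ψM c) = (∫⁻ x, φM x) * ∫⁻ c, ψM c :=
        lintegral_mul_const _ hφMm
      have h7 : (∫⁻ x, φM x) = ∫⁻ x in Icc (0:ℝ) M, φ x :=
        lintegral_indicator measurableSet_Icc φ
      have h8 : (∫⁻ x, ψM x) = ∫⁻ x in Icc (0:ℝ) M, ψ x :=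
        lintegral_indicator measurableSet_Icc ψ
      calc (∫⁻ c in Icc (0:ℝ) M, GplusAux.nnconv φ ψ c)
          ≤ ∫⁻ c, ∫⁻ x, φM x * ψM (c - x) := le_trans h1 h2
        _ = (∫⁻ x, φM x) * ∫⁻ c, ψM c := by rw [h3, h4, h5, h6]
        _ = (∫⁻ x in Icc (0:ℝ) M, φ x) * ∫⁻ x in Icc (0:ℝ) M, ψ x := by rw [h7, h8]
    exact ne_top_of_le_ne_top (ENNReal.mul_ne_top (hφ.locfin M) (hψ.locfin M)) hbound

lemma Good.ae_lt_top {φ : ℝ → ℝ≥0∞} (hφ : Good φ) : ∀ᵐ c : ℝ, φ c < ⊤ := by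
  rw [ae_iff]
  have hBm : MeasurableSet {c : ℝ | ¬ φ c < ⊤} := by
    have : {c : ℝ | ¬ φ c < ⊤} = φ ⁻¹' {⊤} := by
      ext c; simp [lt_top_iff_ne_top]
    rw [this]
    exact hφ.meas (measurableSet_singleton ⊤)
  have hsub : {c : ℝ | ¬ φ c < ⊤} ⊆ ⋃ n : ℕ, {c : ℝ | ¬ φ c < ⊤} ∩ Icc 0 n := by
    intro c hc
    have hc0 : (0:ℝ) ≤ c := by
      by_contra hneg
      push_neg at hneg
      exact hc (by simp [hφ.supp c hneg])
    exact mem_iUnion.mpr ⟨⌈c⌉₊, hc, hc0, Nat.le_ceil c⟩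
  refine measure_mono_null hsub (measure_iUnion_null fun n => ?_)
  have hae : ∀ᵐ c ∂(volume.restrict (Icc (0:ℝ) n)), φ c < ⊤ :=
    MeasureTheory.ae_lt_top hφ.meas (by
      have := hφ.locfin n
      simpa using this)
  have := ae_iff.mp hae
  rwa [Measure.restrict_apply hBm] at this

/-- convolution written as an integral over all of `ℝ` -/
lemma conv_eq_integral (φ ψ : ℝ → ℝ) (hφ0 : ∀ x < (0:ℝ), φ x = 0)
    (hψ0 : ∀ x < (0:ℝ), ψ x = 0) (x : ℝ) :
    conv φ ψ x = ∫ u, φ u * ψ (x - u) := by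
  have h1 : conv φ ψ x = ∫ u in (0:ℝ)..x, φ u * ψ (x - u) := by
    have h := intervalIntegral.integral_comp_sub_left (a := 0) (b := x)
      (fun v => φ v * ψ (x - v)) x
    simp only [sub_sub_cancel, sub_zero, sub_self] at h
    rw [conv, ← h]
  rcases le_or_gt 0 x with hx | hx
  · rw [h1, intervalIntegral.integral_of_le hx, ← integral_indicator measurableSet_Ioc]
    refine integral_congr_ae ?_
    filter_upwards [ae_ne_zero] with u hu
    by_cases h2 : u ∈ Ioc (0:ℝ) x
    · rw [indicator_of_mem h2]
    · rw [indicator_of_notMem h2]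
      rcases lt_or_ge u 0 with h3 | h3
      · simp [hφ0 u h3]
      · have h3' : 0 < u := lt_of_le_of_ne h3 (Ne.symm hu)
        have h4 : x < u := by
          by_contra h5
          push_neg at h5
          exact h2 ⟨h3', h5⟩
        have h6 : x - u < 0 := by linarith
        simp [hψ0 _ h6]
  · have hzero : ∀ u : ℝ, φ u * ψ (x - u) = 0 := by
      intro u
      rcases lt_or_ge u 0 with h2 | h2
      · simp [hφ0 u h2]
      · have : x - u < 0 := by linarith
        simp [hψ0 _ this]
    rw [h1]
    simp [hzero]

/-- extending an interval integral of a nonnegatively-supported function to `ℝ` -/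
lemma interval_to_full (φ : ℝ → ℝ) (hφ0 : ∀ x < (0:ℝ), φ x = 0) {b : ℝ} (hb : 0 ≤ b) :
    ∫ u in (0:ℝ)..b, φ u = ∫ u, (Iic b).indicator φ u := by
  rw [intervalIntegral.integral_of_le hb, ← integral_indicator measurableSet_Ioc]
  refine integral_congr_ae ?_
  filter_upwards [ae_ne_zero] with u hu
  by_cases h1 : u ∈ Ioc (0:ℝ) b
  · rw [indicator_of_mem h1, indicator_of_mem (mem_Iic.mpr h1.2)]
  · rw [indicator_of_notMem h1]
    by_cases h2 : u ≤ b
    · rw [indicator_of_mem (mem_Iic.mpr h2)]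
      have h3 : u < 0 := by
        rcases lt_or_ge 0 u with h4 | h4
        · exact absurd ⟨h4, h2⟩ h1
        · exact lt_of_le_of_ne h4 hu
      exact (hφ0 u h3).symm
    · rw [indicator_of_notMem (by simpa using h2)]

theorem main (f g h : ℝ → ℝ)
    (hfm : Measurable f) (hgm : Measurable g) (hhm : Measurable h)
    (hf : LocallyIntegrable f) (hg : LocallyIntegrable g) (hh : LocallyIntegrable h)
    (hf0 : ∀ x < (0:ℝ), f x = 0) (hg0 : ∀ x < (0:ℝ), g x = 0)
    (hh0 : ∀ x < (0:ℝ), h x = 0) :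
    ∀ᵐ p : ℝ × ℝ, 0 < p.1 → 0 < p.2 →
      (∫ r₁ in (0:ℝ)..p.1, ∫ r₂ in (0:ℝ)..p.2,
          g (p.1 + p.2 - r₁ - r₂) * (f r₁ * h r₂))
        = (∫ r in (0:ℝ)..p.2, h (p.2 - r) * conv f g (p.1 + r))
          - (∫ r in (0:ℝ)..p.2, f (p.1 + p.2 - r) * conv h g r) := by
  classical
  have goodf : Good (fun x => (‖f x‖₊ : ℝ≥0∞)) := by
    refine ⟨hfm.nnnorm.coe_nnreal_ennreal, fun x hx => by simp [hf0 x hx], fun M => ?_⟩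
    have h2 := (hf.integrableOn_isCompact (isCompact_Icc (a := (0:ℝ)) (b := M))).2
    exact ne_of_lt h2
  have goodg : Good (fun x => (‖g x‖₊ : ℝ≥0∞)) := by
    refine ⟨hgm.nnnorm.coe_nnreal_ennreal, fun x hx => by simp [hg0 x hx], fun M => ?_⟩
    have h2 := (hg.integrableOn_isCompact (isCompact_Icc (a := (0:ℝ)) (b := M))).2
    exact ne_of_lt h2
  have goodh : Good (fun x => (‖h x‖₊ : ℝ≥0∞)) := by
    refine ⟨hhm.nnnorm.coe_nnreal_ennreal, fun x hx => by simp [hh0 x hx], fun M => ?_⟩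
    have h2 := (hh.integrableOn_isCompact (isCompact_Icc (a := (0:ℝ)) (b := M))).2
    exact ne_of_lt h2
  have goodW3 : Good (nnconv (fun x => (‖f x‖₊ : ℝ≥0∞))
      (nnconv (fun x => (‖h x‖₊ : ℝ≥0∞)) (fun x => (‖g x‖₊ : ℝ≥0∞)))) :=
    goodf.nnconv (goodh.nnconv goodg)
  set W3 := nnconv (fun x => (‖f x‖₊ : ℝ≥0∞))
      (nnconv (fun x => (‖h x‖₊ : ℝ≥0∞)) (fun x => (‖g x‖₊ : ℝ≥0∞))) with hW3def
  have haeW3 : ∀ᵐ c : ℝ, W3 c < ⊤ := goodW3.ae_lt_top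
  -- lift the a.e. finiteness to the plane
  have hae2 : ∀ᵐ p : ℝ × ℝ, W3 (p.1 + p.2) < ⊤ := by
    rw [ae_iff] at haeW3 ⊢
    have hBm : MeasurableSet {c : ℝ | ¬ W3 c < ⊤} := by
      have he : {c : ℝ | ¬ W3 c < ⊤} = W3 ⁻¹' {⊤} := by
        ext c; simp [lt_top_iff_ne_top]
      rw [he]
      exact goodW3.meas (measurableSet_singleton ⊤)
    have hset : {p : ℝ × ℝ | ¬ W3 (p.1 + p.2) < ⊤}
        = (fun p : ℝ × ℝ => p.1 + p.2) ⁻¹' {c : ℝ | ¬ W3 c < ⊤} := rfl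
    rw [hset, Measure.volume_eq_prod,
      Measure.measure_prod_null (show MeasurableSet ((fun p : ℝ × ℝ => p.1 + p.2) ⁻¹' {c : ℝ | ¬ W3 c < ⊤}) from (measurable_fst.add measurable_snd) hBm)]
    refine ae_of_all _ fun a => ?_
    simp only [Pi.zero_apply]
    have hpre : (Prod.mk a ⁻¹' ((fun p : ℝ × ℝ => p.1 + p.2) ⁻¹' {c : ℝ | ¬ W3 c < ⊤}))
        = (fun x : ℝ => a + x) ⁻¹' {c : ℝ | ¬ W3 c < ⊤} := rfl
    rw [hpre, (measurePreserving_add_left volume a).measure_preimage hBm.nullMeasurableSet]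
    exact haeW3
  filter_upwards [hae2] with p hW ht hs
  set t := p.1 with htdef
  set s := p.2 with hsdef
  -- the basic integrable function on the plane
  have hΘm : Measurable fun q : ℝ × ℝ => f q.1 * (h q.2 * g (t + s - q.1 - q.2)) :=
    (hfm.comp measurable_fst).mul ((hhm.comp measurable_snd).mul
      (hgm.comp ((measurable_const.sub measurable_fst).sub measurable_snd)))
  have hΘ : Integrable (fun q : ℝ × ℝ => f q.1 * (h q.2 * g (t + s - q.1 - q.2))) := by
    refine ⟨hΘm.aestronglyMeasurable, ?_⟩
    have hmeas' : Measurable fun q : ℝ × ℝ =>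
        (‖f q.1‖₊ : ℝ≥0∞) * ((‖h q.2‖₊ : ℝ≥0∞) * (‖g (t + s - q.1 - q.2)‖₊ : ℝ≥0∞)) :=
      ((hfm.comp measurable_fst).nnnorm.coe_nnreal_ennreal).mul (((hhm.comp measurable_snd).nnnorm.coe_nnreal_ennreal).mul
        ((hgm.comp ((measurable_const.sub measurable_fst).sub measurable_snd)).nnnorm.coe_nnreal_ennreal))
    have hcalc : (∫⁻ q : ℝ × ℝ, (‖f q.1 * (h q.2 * g (t + s - q.1 - q.2))‖₊ : ℝ≥0∞))
        = W3 (t + s) := by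
      have e1 : ∀ q : ℝ × ℝ, (‖f q.1 * (h q.2 * g (t + s - q.1 - q.2))‖₊ : ℝ≥0∞)
          = (‖f q.1‖₊ : ℝ≥0∞) * ((‖h q.2‖₊ : ℝ≥0∞) * (‖g (t + s - q.1 - q.2)‖₊ : ℝ≥0∞)) := by
        intro q; simp [nnnorm_mul, ENNReal.coe_mul]
      simp only [e1]
      rw [Measure.volume_eq_prod, lintegral_prod _ hmeas'.aemeasurable]
      have e2 : ∀ r₁ : ℝ, (∫⁻ r₂, (‖f r₁‖₊ : ℝ≥0∞)
            * ((‖h r₂‖₊ : ℝ≥0∞) * (‖g (t + s - r₁ - r₂)‖₊ : ℝ≥0∞)))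
          = (‖f r₁‖₊ : ℝ≥0∞) * nnconv (fun x => (‖h x‖₊ : ℝ≥0∞))
              (fun x => (‖g x‖₊ : ℝ≥0∞)) (t + s - r₁) := by
        intro r₁
        rw [lintegral_const_mul]
        · rfl
        · exact (hhm.nnnorm.coe_nnreal_ennreal).mul
            ((hgm.comp (measurable_const.sub measurable_id)).nnnorm.coe_nnreal_ennreal)
      simp only [e2]
      rfl
    show (∫⁻ q : ℝ × ℝ, (‖f q.1 * (h q.2 * g (t + s - q.1 - q.2))‖₊ : ℝ≥0∞)) < ⊤
    rw [hcalc]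
    exact hW
  -- the cut-off integrand
  set Ψ : ℝ × ℝ → ℝ :=
    fun q => f q.1 * ((Iic s).indicator h q.2 * g (t + s - q.1 - q.2)) with hΨdef
  have hΨint : Integrable Ψ := by
    have he : Ψ = (Prod.snd ⁻¹' Iic s).indicator
        (fun q : ℝ × ℝ => f q.1 * (h q.2 * g (t + s - q.1 - q.2))) := by
      funext q
      simp only [hΨdef]
      by_cases h2 : q.2 ≤ s
      · rw [Set.indicator_of_mem (mem_preimage.mpr (mem_Iic.mpr h2)),
          Set.indicator_of_mem (mem_Iic.mpr h2)]
      · rw [Set.indicator_of_notMem (fun hmem => h2 (mem_Iic.mp (mem_preimage.mp hmem))),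
          Set.indicator_of_notMem (fun hmem => h2 (mem_Iic.mp hmem))]
        simp
    rw [he]
    exact hΘ.indicator (measurable_snd measurableSet_Iic)
  set Ψ₁ : ℝ × ℝ → ℝ := (Prod.fst ⁻¹' Iic t).indicator Ψ with hΨ₁def
  set Ψ₂ : ℝ × ℝ → ℝ := (Prod.fst ⁻¹' Ioi t).indicator Ψ with hΨ₂def
  have hΨ₁int : Integrable Ψ₁ := hΨint.indicator (measurable_fst measurableSet_Iic)
  have hΨ₂int : Integrable Ψ₂ := hΨint.indicator (measurable_fst measurableSet_Ioi)
  have hΨprod : Integrable Ψ ((volume : Measure ℝ).prod volume) := by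
    rwa [← Measure.volume_eq_prod]
  have hΨ₁prod : Integrable Ψ₁ ((volume : Measure ℝ).prod volume) := by
    rwa [← Measure.volume_eq_prod]
  have hΨ₂prod : Integrable Ψ₂ ((volume : Measure ℝ).prod volume) := by
    rwa [← Measure.volume_eq_prod]
  -- the double convolution equals the iterated integral of Ψ₁
  have inner1 : ∀ r₁ : ℝ, (∫ r₂ in (0:ℝ)..s, g (t + s - r₁ - r₂) * (f r₁ * h r₂))
      = ∫ r₂, Ψ (r₁, r₂) := by
    intro r₁
    rw [interval_to_full (fun r₂ => g (t + s - r₁ - r₂) * (f r₁ * h r₂))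
      (fun x hx => by simp [hh0 x hx]) hs.le]
    refine integral_congr_ae (ae_of_all _ fun r₂ => ?_)
    simp only [hΨdef]
    by_cases h2 : r₂ ∈ Iic s
    · rw [Set.indicator_of_mem h2, Set.indicator_of_mem h2]; ring
    · rw [Set.indicator_of_notMem h2, Set.indicator_of_notMem h2]; ring
  have eqI : (∫ r₁ in (0:ℝ)..t, ∫ r₂ in (0:ℝ)..s, g (t + s - r₁ - r₂) * (f r₁ * h r₂))
      = ∫ r₁, ∫ r₂, Ψ₁ (r₁, r₂) := by
    simp only [inner1]
    rw [interval_to_full (fun r₁ => ∫ r₂, Ψ (r₁, r₂))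
      (fun x hx => by
        have hz : ∀ r₂ : ℝ, Ψ (x, r₂) = 0 := fun r₂ => by simp [hΨdef, hf0 x hx]
        simp [hz]) ht.le]
    refine integral_congr_ae (ae_of_all _ fun r₁ => ?_)
    by_cases h2 : r₁ ∈ Iic t
    · rw [Set.indicator_of_mem h2]
      refine integral_congr_ae (ae_of_all _ fun r₂ => ?_)
      simp only [hΨ₁def]
      rw [Set.indicator_of_mem (mem_preimage.mpr h2)]
    · rw [Set.indicator_of_notMem h2]
      symm
      have hz : ∀ r₂ : ℝ, Ψ₁ (r₁, r₂) = 0 := fun r₂ => by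
        simp only [hΨ₁def]
        exact Set.indicator_of_notMem (fun hmem => h2 (mem_preimage.mp hmem)) _
      simp [hz]
  -- the first convolution term
  have KA : ∀ x : ℝ, conv f g x = ∫ u, f u * g (x - u) := conv_eq_integral f g hf0 hg0
  have KB : ∀ x : ℝ, conv h g x = ∫ u, h u * g (x - u) := conv_eq_integral h g hh0 hg0
  have eqA : (∫ r in (0:ℝ)..s, h (s - r) * conv f g (t + r))
      = ∫ r₂, ∫ r₁, Ψ (r₁, r₂) := by
    have st1 := intervalIntegral.integral_comp_sub_left (a := (0:ℝ)) (b := s)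
      (fun r => h r * conv f g (t + s - r)) s
    simp only [sub_self, sub_zero] at st1
    have st0 : (∫ r in (0:ℝ)..s, h (s - r) * conv f g (t + r))
        = ∫ x in (0:ℝ)..s, h (s - x) * conv f g (t + s - (s - x)) := by
      refine intervalIntegral.integral_congr fun x hx => ?_
      have : t + s - (s - x) = t + x := by ring
      rw [this]
    rw [st0, st1, interval_to_full (fun r => h r * conv f g (t + s - r))
      (fun x hx => by simp [hh0 x hx]) hs.le]
    refine integral_congr_ae (ae_of_all _ fun r₂ => ?_)
    by_cases h2 : r₂ ∈ Iic s
    · rw [Set.indicator_of_mem h2, KA, ← integral_const_mul]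
      refine integral_congr_ae (ae_of_all _ fun r₁ => ?_)
      simp only [hΨdef]
      rw [Set.indicator_of_mem h2]
      have harg : t + s - r₂ - r₁ = t + s - r₁ - r₂ := by ring
      rw [harg]
      ring
    · rw [Set.indicator_of_notMem h2]
      symm
      have hz : ∀ r₁ : ℝ, Ψ (r₁, r₂) = 0 := fun r₁ => by
        simp only [hΨdef]
        rw [Set.indicator_of_notMem h2]
        ring
      simp [hz]
  -- the second convolution term
  have eqB : (∫ r in (0:ℝ)..s, f (t + s - r) * conv h g r)
      = ∫ r₁, ∫ r₂, Ψ₂ (r₁, r₂) := by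
    set M : ℝ → ℝ := fun x => ∫ u, (Iic s).indicator h u * g (x - u) with hM
    have st0 : (∫ r in (0:ℝ)..s, f (t + s - r) * conv h g r)
        = ∫ r in (0:ℝ)..s, f (t + s - r) * M r := by
      refine intervalIntegral.integral_congr fun r hr => ?_
      rw [uIcc_of_le hs.le] at hr
      have hMr : conv h g r = M r := by
        rw [KB, hM]
        refine integral_congr_ae (ae_of_all _ fun u => ?_)
        show h u * g (r - u) = (Iic s).indicator h u * g (r - u)
        by_cases h2 : u ∈ Iic s
        · rw [Set.indicator_of_mem h2]
        · rw [Set.indicator_of_notMem h2]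
          have h3 : r - u < 0 := by
            simp only [mem_Iic, not_le] at h2
            have := hr.2
            linarith
          simp [hg0 _ h3]
      rw [hMr]
    have st1 := intervalIntegral.integral_comp_sub_left (a := (0:ℝ)) (b := s)
      (fun r₁ => f r₁ * M (t + s - r₁)) (t + s)
    simp only [sub_sub_cancel, sub_zero] at st1
    have hts : t + s - s = t := by ring
    rw [hts] at st1
    rw [st0, st1, intervalIntegral.integral_of_le (by linarith : t ≤ t + s),
      ← integral_indicator measurableSet_Ioc]
    refine integral_congr_ae (ae_of_all _ fun r₁ => ?_)
    by_cases h1 : r₁ ≤ t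
    · rw [Set.indicator_of_notMem (fun hmem => absurd hmem.1 (not_lt.mpr h1))]
      symm
      have hz : ∀ r₂ : ℝ, Ψ₂ (r₁, r₂) = 0 := fun r₂ => by
        simp only [hΨ₂def]
        exact Set.indicator_of_notMem
          (fun hmem => absurd (mem_Ioi.mp (mem_preimage.mp hmem)) (not_lt.mpr h1)) _
      simp [hz]
    · push_neg at h1
      by_cases h2 : r₁ ≤ t + s
      · rw [Set.indicator_of_mem (mem_Ioc.mpr ⟨h1, h2⟩)]
        simp only [hM]
        rw [← integral_const_mul]
        refine integral_congr_ae (ae_of_all _ fun r₂ => ?_)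
        simp only [hΨ₂def]
        rw [Set.indicator_of_mem (mem_preimage.mpr (mem_Ioi.mpr h1))]
      · rw [Set.indicator_of_notMem (fun hmem => absurd hmem.2 h2)]
        symm
        have hz : ∀ r₂ : ℝ, Ψ₂ (r₁, r₂) = 0 := fun r₂ => by
          simp only [hΨ₂def]
          rw [Set.indicator_of_mem (mem_preimage.mpr (mem_Ioi.mpr h1))]
          simp only [hΨdef]
          rcases lt_or_ge r₂ 0 with h3 | h3
          · rw [Set.indicator_of_mem (mem_Iic.mpr (by linarith : r₂ ≤ s))]
            simp [hh0 r₂ h3]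
          · have h4 : t + s - r₁ - r₂ < 0 := by
              push_neg at h2
              linarith
            simp [hg0 _ h4]
        simp [hz]
  -- Fubini: assemble everything
  have hsum : ∀ q : ℝ × ℝ, Ψ₁ q + Ψ₂ q = Ψ q := by
    intro q
    simp only [hΨ₁def, hΨ₂def]
    by_cases h1 : q.1 ≤ t
    · rw [Set.indicator_of_mem (mem_preimage.mpr (mem_Iic.mpr h1)),
        Set.indicator_of_notMem
          (fun hmem => absurd (mem_Ioi.mp (mem_preimage.mp hmem)) (not_lt.mpr h1))]
      ring
    · push_neg at h1
      rw [Set.indicator_of_notMem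
          (fun hmem => absurd (mem_Iic.mp (mem_preimage.mp hmem)) (not_le.mpr h1)),
        Set.indicator_of_mem (mem_preimage.mpr (mem_Ioi.mpr h1))]
      ring
  have key : (∫ r₁, ∫ r₂, Ψ₁ (r₁, r₂)) + (∫ r₁, ∫ r₂, Ψ₂ (r₁, r₂))
      = ∫ r₂, ∫ r₁, Ψ (r₁, r₂) := by
    rw [← integral_add hΨ₁prod.integral_prod_left hΨ₂prod.integral_prod_left]
    have step : ∀ᵐ r₁ : ℝ ∂(volume : Measure ℝ),
        (∫ r₂, Ψ₁ (r₁, r₂)) + (∫ r₂, Ψ₂ (r₁, r₂)) = ∫ r₂, Ψ (r₁, r₂) := by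
      filter_upwards [hΨ₁prod.prod_right_ae, hΨ₂prod.prod_right_ae] with r₁ h1 h2
      rw [← integral_add h1 h2]
      refine integral_congr_ae (ae_of_all _ fun r₂ => ?_)
      exact hsum (r₁, r₂)
    rw [integral_congr_ae step]
    exact integral_integral_swap hΨprod
  rw [eqI, eqA, eqB]
  linarith [key]

end GplusAux


/-- For `f,g,h ∈ L¹_loc(ℝ₊)` and a.e. `(t,s) ∈ (0,∞)²`,
`(g⁺ *₂ (f⊗h))(t,s) = (h * (f*g)_t)(s) − (f_t * (h*g))(s)`. -/
theorem gplus_doubleconv_tensor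
    (f g h : ℝ → ℝ)
    (hf : LocallyIntegrableOn f (Set.Ici (0:ℝ)))
    (hg : LocallyIntegrableOn g (Set.Ici (0:ℝ)))
    (hh : LocallyIntegrableOn h (Set.Ici (0:ℝ))) :
    ∀ᵐ p : ℝ × ℝ, 0 < p.1 → 0 < p.2 →
      (∫ r₁ in (0:ℝ)..p.1, ∫ r₂ in (0:ℝ)..p.2,
          g (p.1 + p.2 - r₁ - r₂) * (f r₁ * h r₂))
        = (∫ r in (0:ℝ)..p.2, h (p.2 - r) * conv f g (p.1 + r))
          - (∫ r in (0:ℝ)..p.2, f (p.1 + p.2 - r) * conv h g r) := by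
  classical
  open GplusAux in
  -- replace each function by a measurable representative supported on `[0,∞)`
  have mk : ∀ φ : ℝ → ℝ, LocallyIntegrableOn φ (Set.Ici (0:ℝ)) →
      ∃ φ₀ : ℝ → ℝ, Measurable φ₀ ∧ LocallyIntegrable φ₀ ∧ (∀ x < (0:ℝ), φ₀ x = 0) ∧
        φ₀ =ᵐ[volume] (Ici (0:ℝ)).indicator φ := by
    intro φ hφ
    have hloc : LocallyIntegrable ((Ici (0:ℝ)).indicator φ) := by
      rw [locallyIntegrable_iff]
      intro k hk
      rw [IntegrableOn, integrable_indicator_iff measurableSet_Ici, IntegrableOn,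
        Measure.restrict_restrict measurableSet_Ici]
      exact hφ.integrableOn_compact_subset inter_subset_left (hk.inter_left isClosed_Ici)
    have asm := hloc.aestronglyMeasurable
    have heq : (Ici (0:ℝ)).indicator (asm.mk _) =ᵐ[volume] (Ici (0:ℝ)).indicator φ := by
      filter_upwards [asm.ae_eq_mk] with x hx
      by_cases h2 : x ∈ Ici (0:ℝ)
      · rw [indicator_of_mem h2, ← hx, indicator_of_mem h2]
      · rw [indicator_of_notMem h2, indicator_of_notMem h2]
    refine ⟨(Ici (0:ℝ)).indicator (asm.mk _), ?_, ?_, ?_, heq⟩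
    · exact (asm.stronglyMeasurable_mk.indicator measurableSet_Ici).measurable
    · rw [locallyIntegrable_iff]
      intro k hk
      exact ((hloc.integrableOn_isCompact hk).congr (ae_restrict_of_ae heq.symm))
    · intro x hx
      exact indicator_of_notMem (by simpa using not_le.mpr hx) _
  obtain ⟨f₀, hf₀m, hf₀loc, hf₀0, hf₀ae⟩ := mk f hf
  obtain ⟨g₀, hg₀m, hg₀loc, hg₀0, hg₀ae⟩ := mk g hg
  obtain ⟨h₀, hh₀m, hh₀loc, hh₀0, hh₀ae⟩ := mk h hh
  -- convolutions agree on the nonnegative axis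
  have hconv : ∀ φ ψ φ₀ ψ₀ : ℝ → ℝ,
      φ₀ =ᵐ[volume] (Ici (0:ℝ)).indicator φ → ψ₀ =ᵐ[volume] (Ici (0:ℝ)).indicator ψ →
      ∀ x : ℝ, 0 ≤ x → conv φ ψ x = conv φ₀ ψ₀ x := by
    intro φ ψ φ₀ ψ₀ hφae hψae x hx
    unfold conv
    refine intervalIntegral.integral_congr_ae ?_
    have hcomp := (GplusAux.mp_sub_left x).quasiMeasurePreserving.ae_eq hφae
    filter_upwards [hcomp, hψae] with u h1 h2 hu
    simp only [Function.comp_apply] at h1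
    rw [uIoc_of_le hx] at hu
    have e1 : φ (x - u) = φ₀ (x - u) := by
      rw [h1, indicator_of_mem (mem_Ici.mpr (by linarith [hu.1, hu.2] : (0:ℝ) ≤ x - u))]
    have e2 : ψ u = ψ₀ u := by
      rw [h2, indicator_of_mem (mem_Ici.mpr hu.1.le)]
    rw [e1, e2]
  have hmain := GplusAux.main f₀ g₀ h₀ hf₀m hg₀m hh₀m hf₀loc hg₀loc hh₀loc hf₀0 hg₀0 hh₀0
  filter_upwards [hmain] with p hp ht hs
  have hp' := hp ht hs
  have eL : (∫ r₁ in (0:ℝ)..p.1, ∫ r₂ in (0:ℝ)..p.2,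
        g (p.1 + p.2 - r₁ - r₂) * (f r₁ * h r₂))
      = ∫ r₁ in (0:ℝ)..p.1, ∫ r₂ in (0:ℝ)..p.2,
        g₀ (p.1 + p.2 - r₁ - r₂) * (f₀ r₁ * h₀ r₂) := by
    refine intervalIntegral.integral_congr_ae ?_
    filter_upwards [hf₀ae] with r₁ h1 hr₁
    rw [uIoc_of_le ht.le] at hr₁
    have e1 : f r₁ = f₀ r₁ := by rw [h1, indicator_of_mem (mem_Ici.mpr hr₁.1.le)]
    refine intervalIntegral.integral_congr_ae ?_
    have hcomp := (GplusAux.mp_sub_left (p.1 + p.2 - r₁)).quasiMeasurePreserving.ae_eq hg₀ae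
    filter_upwards [hcomp, hh₀ae] with r₂ h2 h3 hr₂
    simp only [Function.comp_apply] at h2
    rw [uIoc_of_le hs.le] at hr₂
    have harg : (0:ℝ) ≤ p.1 + p.2 - r₁ - r₂ := by
      have := hr₁.2; have := hr₂.2; linarith
    have e2 : g (p.1 + p.2 - r₁ - r₂) = g₀ (p.1 + p.2 - r₁ - r₂) := by
      rw [h2, indicator_of_mem (mem_Ici.mpr harg)]
    have e3 : h r₂ = h₀ r₂ := by rw [h3, indicator_of_mem (mem_Ici.mpr hr₂.1.le)]
    rw [e1, e2, e3]
  have eA : (∫ r in (0:ℝ)..p.2, h (p.2 - r) * conv f g (p.1 + r))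
      = ∫ r in (0:ℝ)..p.2, h₀ (p.2 - r) * conv f₀ g₀ (p.1 + r) := by
    refine intervalIntegral.integral_congr_ae ?_
    have hcomp := (GplusAux.mp_sub_left p.2).quasiMeasurePreserving.ae_eq hh₀ae
    filter_upwards [hcomp] with r h1 hr
    simp only [Function.comp_apply] at h1
    rw [uIoc_of_le hs.le] at hr
    have e1 : h (p.2 - r) = h₀ (p.2 - r) := by
      rw [h1, indicator_of_mem (mem_Ici.mpr (by linarith [hr.2] : (0:ℝ) ≤ p.2 - r))]
    rw [e1, hconv f g f₀ g₀ hf₀ae hg₀ae (p.1 + r) (by linarith [hr.1])]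
  have eB : (∫ r in (0:ℝ)..p.2, f (p.1 + p.2 - r) * conv h g r)
      = ∫ r in (0:ℝ)..p.2, f₀ (p.1 + p.2 - r) * conv h₀ g₀ r := by
    refine intervalIntegral.integral_congr_ae ?_
    have hcomp := (GplusAux.mp_sub_left (p.1 + p.2)).quasiMeasurePreserving.ae_eq hf₀ae
    filter_upwards [hcomp] with r h1 hr
    simp only [Function.comp_apply] at h1
    rw [uIoc_of_le hs.le] at hr
    have e1 : f (p.1 + p.2 - r) = f₀ (p.1 + p.2 - r) := by
      rw [h1, indicator_of_mem (mem_Ici.mpr (by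
        have := hr.2; linarith : (0:ℝ) ≤ p.1 + p.2 - r))]
    rw [e1, hconv h g h₀ g₀ hh₀ae hg₀ae r hr.1.le]
  rw [eL, eA, eB]
  exact hp'
end
end

section
/- Let f, g, h ∈ L¹_loc(ℝ₊) and let τ ≥ 0. Then for almost every t ≥ τ, ∫₀^{t−τ} h(t−s)(g*f)(s) ds + ∫₀^τ f(t−s)(g*h)(s) ds = (f*g*h)(t) − ∫₀^{t−τ} ∫₀^τ g(t−r₁−r₂) f(r₁) h(r₂) dr₂ dr₁, i.e. the left-hand side equals (f*g*h)(t) − (g⁺ *₂ (f⊗h))(t−τ, τ). -/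
open MeasureTheory Filter Set Topology

noncomputable section

lemma conv_apply (f g : ℝ → ℝ) (t : ℝ) :
    conv f g t = ∫ s in (0:ℝ)..t, f (t - s) * g s := rfl

/-- Truncation of a function to `[0,∞)`. -/
def restr (f : ℝ → ℝ) : ℝ → ℝ := (Set.Ici (0:ℝ)).indicator f

lemma restr_eq (f : ℝ → ℝ) {x : ℝ} (hx : 0 ≤ x) : restr f x = f x :=
  Set.indicator_of_mem (Set.mem_Ici.2 hx) f

lemma conv_restr (u v : ℝ → ℝ) {s : ℝ} (hs : 0 ≤ s) :
    conv u v s = conv (restr u) (restr v) s := by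
  rw [conv_apply, conv_apply]
  apply intervalIntegral.integral_congr
  intro x hx
  rw [Set.uIcc_of_le hs] at hx
  show u (s - x) * v x = restr u (s - x) * restr v x
  rw [restr_eq u (by linarith [hx.2]), restr_eq v hx.1]


/-- Swap the order of an interval-convolution integrand. -/
lemma conv_eq_aux (f g : ℝ → ℝ) (x : ℝ) :
    (∫ s in (0:ℝ)..x, f (x - s) * g s) = ∫ s in (0:ℝ)..x, f s * g (x - s) := by
  have h := intervalIntegral.integral_comp_sub_left (a := (0:ℝ)) (b := x)
    (fun s => f s * g (x - s)) x
  simp only [sub_self, sub_zero] at h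
  rw [← h]
  apply intervalIntegral.integral_congr
  intro s _
  simp [sub_sub_cancel]

/-- Slice an integral over `{p | 0 ≤ p.1 ∧ a ≤ p.2 ∧ p.1 + p.2 ≤ t}` into iterated
interval integrals, outer variable the second coordinate. -/
lemma slice1 (F : ℝ → ℝ → ℝ) (a t : ℝ) (hat : a ≤ t)
    (hS : IntegrableOn (fun p : ℝ × ℝ => F p.1 p.2)
      {p : ℝ × ℝ | 0 ≤ p.1 ∧ a ≤ p.2 ∧ p.1 + p.2 ≤ t}) :
    (∫ p in {p : ℝ × ℝ | 0 ≤ p.1 ∧ a ≤ p.2 ∧ p.1 + p.2 ≤ t}, F p.1 p.2)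
      = ∫ r₂ in a..t, ∫ r₁ in (0:ℝ)..(t - r₂), F r₁ r₂ := by
  set S : Set (ℝ × ℝ) := {p | 0 ≤ p.1 ∧ a ≤ p.2 ∧ p.1 + p.2 ≤ t} with hSdef
  have hSm : MeasurableSet S :=
    (measurableSet_le measurable_const measurable_fst).inter
      ((measurableSet_le measurable_const measurable_snd).inter
        (measurableSet_le (measurable_fst.add measurable_snd) measurable_const))
  have hInd : Integrable (S.indicator fun p : ℝ × ℝ => F p.1 p.2)
      ((volume : Measure ℝ).prod volume) := by
    rw [← Measure.volume_eq_prod]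
    exact (integrable_indicator_iff hSm).2 hS
  have key : ∀ r₂ : ℝ, (∫ r₁ : ℝ, S.indicator (fun p : ℝ × ℝ => F p.1 p.2) (r₁, r₂))
      = (Icc a t).indicator (fun r₂ => ∫ r₁ in Icc (0:ℝ) (t - r₂), F r₁ r₂) r₂ := by
    intro r₂
    by_cases ha' : a ≤ r₂
    · by_cases ht' : r₂ ≤ t
      · rw [Set.indicator_of_mem (by exact ⟨ha', ht'⟩)]
        have hp : ∀ r₁ : ℝ, S.indicator (fun p : ℝ × ℝ => F p.1 p.2) (r₁, r₂)
            = (Icc (0:ℝ) (t - r₂)).indicator (fun r₁ => F r₁ r₂) r₁ := by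
          intro r₁
          have hiff : ((r₁, r₂) ∈ S) ↔ r₁ ∈ Icc (0:ℝ) (t - r₂) := by
            simp only [hSdef, Set.mem_setOf_eq, Set.mem_Icc]
            constructor
            · rintro ⟨h1, _, h3⟩; exact ⟨h1, by linarith⟩
            · rintro ⟨h1, h2⟩; exact ⟨h1, ha', by linarith⟩
          simp only [Set.indicator_apply, hiff]
        rw [integral_congr_ae (Filter.Eventually.of_forall hp),
          integral_indicator measurableSet_Icc]
      · rw [Set.indicator_of_notMem (by simp [Set.mem_Icc]; intro; linarith)]
        have hp : ∀ r₁ : ℝ, S.indicator (fun p : ℝ × ℝ => F p.1 p.2) (r₁, r₂) = 0 := by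
          intro r₁
          exact Set.indicator_of_notMem (fun hm => ht' (by linarith [hm.1, hm.2.2])) _
        rw [integral_congr_ae (Filter.Eventually.of_forall hp), integral_zero]
    · rw [Set.indicator_of_notMem (by simp [Set.mem_Icc]; intro h; exact absurd h ha')]
      have hp : ∀ r₁ : ℝ, S.indicator (fun p : ℝ × ℝ => F p.1 p.2) (r₁, r₂) = 0 := by
        intro r₁
        exact Set.indicator_of_notMem (fun hm => ha' hm.2.1) _
      rw [integral_congr_ae (Filter.Eventually.of_forall hp), integral_zero]
  calc (∫ p in S, F p.1 p.2)
      = ∫ p : ℝ × ℝ, S.indicator (fun p : ℝ × ℝ => F p.1 p.2) p := by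
        rw [integral_indicator hSm]
    _ = ∫ r₂ : ℝ, ∫ r₁ : ℝ, S.indicator (fun p : ℝ × ℝ => F p.1 p.2) (r₁, r₂) := by
        rw [Measure.volume_eq_prod, MeasureTheory.integral_prod_symm _ hInd]
    _ = ∫ r₂ : ℝ, (Icc a t).indicator (fun r₂ => ∫ r₁ in Icc (0:ℝ) (t - r₂), F r₁ r₂) r₂ :=
        integral_congr_ae (Filter.Eventually.of_forall key)
    _ = ∫ r₂ in Icc a t, ∫ r₁ in Icc (0:ℝ) (t - r₂), F r₁ r₂ :=
        integral_indicator measurableSet_Icc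
    _ = ∫ r₂ in Ioc a t, ∫ r₁ in Icc (0:ℝ) (t - r₂), F r₁ r₂ := by
        rw [integral_Icc_eq_integral_Ioc]
    _ = ∫ r₂ in Ioc a t, ∫ r₁ in (0:ℝ)..(t - r₂), F r₁ r₂ := by
        apply setIntegral_congr_fun measurableSet_Ioc
        intro r₂ hr₂
        show (∫ r₁ in Icc (0:ℝ) (t - r₂), F r₁ r₂) = ∫ r₁ in (0:ℝ)..(t - r₂), F r₁ r₂
        rw [integral_Icc_eq_integral_Ioc,
          intervalIntegral.integral_of_le (by linarith [hr₂.2] : (0:ℝ) ≤ t - r₂)]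
    _ = ∫ r₂ in a..t, ∫ r₁ in (0:ℝ)..(t - r₂), F r₁ r₂ :=
        (intervalIntegral.integral_of_le hat).symm

/-- Same, outer variable the first coordinate. -/
lemma slice2 (F : ℝ → ℝ → ℝ) (b t : ℝ) (hbt : b ≤ t)
    (hS : IntegrableOn (fun p : ℝ × ℝ => F p.1 p.2)
      {p : ℝ × ℝ | b ≤ p.1 ∧ 0 ≤ p.2 ∧ p.1 + p.2 ≤ t}) :
    (∫ p in {p : ℝ × ℝ | b ≤ p.1 ∧ 0 ≤ p.2 ∧ p.1 + p.2 ≤ t}, F p.1 p.2)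
      = ∫ r₁ in b..t, ∫ r₂ in (0:ℝ)..(t - r₁), F r₁ r₂ := by
  have hset : (Prod.swap ⁻¹' {p : ℝ × ℝ | b ≤ p.1 ∧ 0 ≤ p.2 ∧ p.1 + p.2 ≤ t})
      = {p : ℝ × ℝ | 0 ≤ p.1 ∧ b ≤ p.2 ∧ p.1 + p.2 ≤ t} := by
    ext p
    simp only [Set.mem_preimage, Prod.fst_swap, Prod.snd_swap, Set.mem_setOf_eq]
    constructor
    · rintro ⟨h1, h2, h3⟩; exact ⟨h2, h1, by linarith⟩
    · rintro ⟨h1, h2, h3⟩; exact ⟨h2, h1, by linarith⟩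
  have hmp : MeasurePreserving (Prod.swap : ℝ × ℝ → ℝ × ℝ)
      ((volume : Measure ℝ).prod volume) ((volume : Measure ℝ).prod volume) :=
    Measure.measurePreserving_swap
  have hswap := hmp.setIntegral_preimage_emb MeasurableEquiv.prodComm.measurableEmbedding
    (fun p : ℝ × ℝ => F p.1 p.2) {p : ℝ × ℝ | b ≤ p.1 ∧ 0 ≤ p.2 ∧ p.1 + p.2 ≤ t}
  simp only [Prod.fst_swap, Prod.snd_swap] at hswap
  have hint2 : IntegrableOn (fun p : ℝ × ℝ => F p.2 p.1)
      {p : ℝ × ℝ | 0 ≤ p.1 ∧ b ≤ p.2 ∧ p.1 + p.2 ≤ t} := by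
    rw [← hset]
    have := (hmp.integrableOn_comp_preimage
      MeasurableEquiv.prodComm.measurableEmbedding
      (f := fun p : ℝ × ℝ => F p.1 p.2)
      (s := {p : ℝ × ℝ | b ≤ p.1 ∧ 0 ≤ p.2 ∧ p.1 + p.2 ≤ t})).2
      (by rw [← Measure.volume_eq_prod]; exact hS)
    rw [← Measure.volume_eq_prod] at this
    exact this
  have h1 := slice1 (fun x y => F y x) b t hbt hint2
  calc (∫ p in {p : ℝ × ℝ | b ≤ p.1 ∧ 0 ≤ p.2 ∧ p.1 + p.2 ≤ t}, F p.1 p.2)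
      = ∫ p in Prod.swap ⁻¹' {p : ℝ × ℝ | b ≤ p.1 ∧ 0 ≤ p.2 ∧ p.1 + p.2 ≤ t},
          F p.2 p.1 := by
        rw [Measure.volume_eq_prod, ← hswap]
    _ = ∫ p in {p : ℝ × ℝ | 0 ≤ p.1 ∧ b ≤ p.2 ∧ p.1 + p.2 ≤ t}, F p.2 p.1 := by rw [hset]
    _ = ∫ r₁ in b..t, ∫ r₂ in (0:ℝ)..(t - r₁), F r₁ r₂ := h1

/-- The shear `((r₁,r₂),v) ↦ ((r₁,r₂), v + (r₁+r₂))` as a measurable equivalence. -/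
def shear : ((ℝ × ℝ) × ℝ) ≃ᵐ ((ℝ × ℝ) × ℝ) where
  toFun q := (q.1, q.2 + (q.1.1 + q.1.2))
  invFun q := (q.1, q.2 - (q.1.1 + q.1.2))
  left_inv q := by ext <;> simp
  right_inv q := by ext <;> simp
  measurable_toFun := by
    apply Measurable.prodMk measurable_fst
    exact measurable_snd.add (measurable_fst.fst.add measurable_fst.snd)
  measurable_invFun := by
    apply Measurable.prodMk measurable_fst
    exact measurable_snd.sub (measurable_fst.fst.add measurable_fst.snd)

lemma shear_measurePreserving :
    MeasurePreserving (shear : ((ℝ × ℝ) × ℝ) → ((ℝ × ℝ) × ℝ))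
      (((volume : Measure ℝ).prod volume).prod volume)
      (((volume : Measure ℝ).prod volume).prod volume) := by
  have := MeasurePreserving.skew_product
    (μa := (volume : Measure ℝ).prod volume) (μb := (volume : Measure ℝ).prod volume)
    (μc := (volume : Measure ℝ)) (μd := (volume : Measure ℝ))
    (f := id) (g := fun x v => v + (x.1 + x.2))
    (MeasurePreserving.id _)
    (by
      apply Measurable.add measurable_snd
      exact measurable_fst.fst.add measurable_fst.snd)
    (Filter.Eventually.of_forall fun x => map_add_right_eq_self volume (x.1 + x.2))
  exact this

lemma ae_integrableOn_triangle (f g h : ℝ → ℝ)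
    (hfm : AEStronglyMeasurable f (volume : Measure ℝ))
    (hgm : AEStronglyMeasurable g (volume : Measure ℝ))
    (hhm : AEStronglyMeasurable h (volume : Measure ℝ))
    (hfi : ∀ N : ℝ, IntegrableOn f (Icc 0 N))
    (hgi : ∀ N : ℝ, IntegrableOn g (Icc 0 N))
    (hhi : ∀ N : ℝ, IntegrableOn h (Icc 0 N)) :
    ∀ᵐ t : ℝ, IntegrableOn (fun p : ℝ × ℝ => f p.1 * g (t - p.1 - p.2) * h p.2)
      {p : ℝ × ℝ | 0 ≤ p.1 ∧ 0 ≤ p.2 ∧ p.1 + p.2 ≤ t} := by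
  have main : ∀ N : ℕ, ∀ᵐ t : ℝ, (t ≤ (N:ℝ) →
      IntegrableOn (fun p : ℝ × ℝ => f p.1 * g (t - p.1 - p.2) * h p.2)
        {p : ℝ × ℝ | 0 ≤ p.1 ∧ 0 ≤ p.2 ∧ p.1 + p.2 ≤ t}) := by
    intro N
    set K : Set ((ℝ × ℝ) × ℝ) :=
      {q | 0 ≤ q.1.1 ∧ 0 ≤ q.1.2 ∧ q.1.1 + q.1.2 ≤ q.2 ∧ q.2 ≤ (N:ℝ)} with hKdef
    have hKm : MeasurableSet K := by
      apply MeasurableSet.inter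
      · exact measurableSet_le measurable_const measurable_fst.fst
      apply MeasurableSet.inter
      · exact measurableSet_le measurable_const measurable_fst.snd
      apply MeasurableSet.inter
      · exact measurableSet_le (measurable_fst.fst.add measurable_fst.snd) measurable_snd
      · exact measurableSet_le measurable_snd measurable_const
    set Θ : ((ℝ × ℝ) × ℝ) → ℝ :=
      K.indicator (fun q => f q.1.1 * g (q.2 - q.1.1 - q.1.2) * h q.1.2) with hΘdef
    set K' : Set ((ℝ × ℝ) × ℝ) :=
      {q | 0 ≤ q.1.1 ∧ 0 ≤ q.1.2 ∧ 0 ≤ q.2 ∧ q.1.1 + q.1.2 + q.2 ≤ (N:ℝ)} with hK'def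
    have hK'm : MeasurableSet K' := by
      apply MeasurableSet.inter
      · exact measurableSet_le measurable_const measurable_fst.fst
      apply MeasurableSet.inter
      · exact measurableSet_le measurable_const measurable_fst.snd
      apply MeasurableSet.inter
      · exact measurableSet_le measurable_const measurable_snd
      · exact measurableSet_le ((measurable_fst.fst.add measurable_fst.snd).add measurable_snd)
          measurable_const
    have hcomp : (Θ ∘ (shear : ((ℝ × ℝ) × ℝ) → ((ℝ × ℝ) × ℝ)))
        = K'.indicator (fun q => f q.1.1 * g q.2 * h q.1.2) := by
      funext q
      have hiff : (shear q ∈ K) ↔ q ∈ K' := by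
        simp only [hKdef, hK'def, Set.mem_setOf_eq, shear, MeasurableEquiv.coe_mk,
          Equiv.coe_fn_mk]
        constructor
        · rintro ⟨h1, h2, h3, h4⟩; exact ⟨h1, h2, by linarith, by linarith⟩
        · rintro ⟨h1, h2, h3, h4⟩; exact ⟨h1, h2, by linarith, by linarith⟩
      have hval : f (shear q).1.1 * g ((shear q).2 - (shear q).1.1 - (shear q).1.2)
          * h (shear q).1.2 = f q.1.1 * g q.2 * h q.1.2 := by
        simp only [shear, MeasurableEquiv.coe_mk, Equiv.coe_fn_mk]
        congr 2
        ring
      simp only [Function.comp_apply, hΘdef, Set.indicator_apply, hiff]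
      split_ifs with hq
      · exact hval
      · rfl
    have hK'sub : K' ⊆ (Icc (0:ℝ) N ×ˢ Icc (0:ℝ) N) ×ˢ Icc (0:ℝ) N := by
      rintro q ⟨h1, h2, h3, h4⟩
      refine ⟨⟨⟨h1, by linarith⟩, ⟨h2, by linarith⟩⟩, ⟨h3, by linarith⟩⟩
    have hbox : IntegrableOn (fun q : (ℝ × ℝ) × ℝ => f q.1.1 * g q.2 * h q.1.2)
        ((Icc (0:ℝ) N ×ˢ Icc (0:ℝ) N) ×ˢ Icc (0:ℝ) N)
        (((volume : Measure ℝ).prod volume).prod volume) := by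
      rw [IntegrableOn, ← Measure.prod_restrict, ← Measure.prod_restrict]
      have h1 : Integrable (fun x : ℝ × ℝ => f x.1 * h x.2)
          (((volume : Measure ℝ).restrict (Icc 0 N)).prod
            ((volume : Measure ℝ).restrict (Icc 0 N))) :=
        Integrable.mul_prod (hfi N) (hhi N)
      have h2 := Integrable.mul_prod h1 (hgi N)
      apply h2.congr
      apply Filter.Eventually.of_forall
      intro q
      show f q.1.1 * h q.1.2 * g q.2 = f q.1.1 * g q.2 * h q.1.2
      ring
    have hΘint : Integrable Θ (((volume : Measure ℝ).prod volume).prod volume) := by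
      rw [← shear_measurePreserving.integrable_comp_emb shear.measurableEmbedding]
      rw [hcomp]
      rw [integrable_indicator_iff hK'm]
      exact hbox.mono_set hK'sub
    have hae := hΘint.prod_left_ae
    filter_upwards [hae] with t hInt ht
    have hfun : (fun p : ℝ × ℝ => Θ (p, t))
        = ({p : ℝ × ℝ | 0 ≤ p.1 ∧ 0 ≤ p.2 ∧ p.1 + p.2 ≤ t}).indicator
            (fun p : ℝ × ℝ => f p.1 * g (t - p.1 - p.2) * h p.2) := by
      funext p
      have hiff : ((p, t) ∈ K) ↔ p ∈ {p : ℝ × ℝ | 0 ≤ p.1 ∧ 0 ≤ p.2 ∧ p.1 + p.2 ≤ t} := by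
        simp only [hKdef, Set.mem_setOf_eq]
        constructor
        · rintro ⟨h1, h2, h3, _⟩; exact ⟨h1, h2, h3⟩
        · rintro ⟨h1, h2, h3⟩; exact ⟨h1, h2, h3, ht⟩
      simp only [hΘdef, Set.indicator_apply, hiff]
    have hTm : MeasurableSet {p : ℝ × ℝ | 0 ≤ p.1 ∧ 0 ≤ p.2 ∧ p.1 + p.2 ≤ t} :=
      (measurableSet_le measurable_const measurable_fst).inter
        ((measurableSet_le measurable_const measurable_snd).inter
          (measurableSet_le (measurable_fst.add measurable_snd) measurable_const))
    have : Integrable (({p : ℝ × ℝ | 0 ≤ p.1 ∧ 0 ≤ p.2 ∧ p.1 + p.2 ≤ t}).indicator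
        (fun p : ℝ × ℝ => f p.1 * g (t - p.1 - p.2) * h p.2)) (volume : Measure (ℝ × ℝ)) := by
      rw [Measure.volume_eq_prod, ← hfun]
      exact hInt
    rwa [integrable_indicator_iff hTm] at this
  have hall : ∀ᵐ t : ℝ, ∀ N : ℕ, (t ≤ (N:ℝ) →
      IntegrableOn (fun p : ℝ × ℝ => f p.1 * g (t - p.1 - p.2) * h p.2)
        {p : ℝ × ℝ | 0 ≤ p.1 ∧ 0 ≤ p.2 ∧ p.1 + p.2 ≤ t}) := ae_all_iff.2 main
  filter_upwards [hall] with t ht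
  obtain ⟨N, hN⟩ := exists_nat_ge t
  exact ht N hN

lemma null_h (c : ℝ) : (volume : Measure (ℝ × ℝ)) {p | p.2 = c} = 0 := by
  have hs : {p : ℝ × ℝ | p.2 = c} = (univ : Set ℝ) ×ˢ ({c} : Set ℝ) := by
    ext p
    simp only [Set.mem_setOf_eq, Set.mem_prod, Set.mem_univ, Set.mem_singleton_iff, true_and]
  rw [hs, Measure.volume_eq_prod, Measure.prod_prod]
  simp

lemma null_v (c : ℝ) : (volume : Measure (ℝ × ℝ)) {p | p.1 = c} = 0 := by
  have hs : {p : ℝ × ℝ | p.1 = c} = ({c} : Set ℝ) ×ˢ (univ : Set ℝ) := by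
    ext p
    simp only [Set.mem_setOf_eq, Set.mem_prod, Set.mem_univ, Set.mem_singleton_iff, and_true]
  rw [hs, Measure.volume_eq_prod, Measure.prod_prod]
  simp

lemma null_diag (t : ℝ) : (volume : Measure (ℝ × ℝ)) {p | p.1 + p.2 = t} = 0 := by
  have hm : MeasurableSet {p : ℝ × ℝ | p.1 + p.2 = t} :=
    (measurable_fst.add measurable_snd) (measurableSet_singleton t)
  rw [Measure.volume_eq_prod, Measure.prod_apply hm]
  have hfib : ∀ x : ℝ, (Prod.mk x ⁻¹' {p : ℝ × ℝ | p.1 + p.2 = t}) = {t - x} := by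
    intro x; ext y
    simp only [Set.mem_preimage, Set.mem_setOf_eq, Set.mem_singleton_iff]
    constructor <;> intro hy <;> linarith
  simp [hfib]

lemma region_split (F : ℝ × ℝ → ℝ) (τ t : ℝ) (hτ : 0 ≤ τ) (hτt : τ ≤ t)
    (hT : IntegrableOn F {p : ℝ × ℝ | 0 ≤ p.1 ∧ 0 ≤ p.2 ∧ p.1 + p.2 ≤ t}) :
    (∫ p in {p : ℝ × ℝ | 0 ≤ p.1 ∧ 0 ≤ p.2 ∧ p.1 + p.2 ≤ t}, F p)
      = (∫ p in {p : ℝ × ℝ | 0 ≤ p.1 ∧ τ ≤ p.2 ∧ p.1 + p.2 ≤ t}, F p)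
        + (∫ p in {p : ℝ × ℝ | t - τ ≤ p.1 ∧ 0 ≤ p.2 ∧ p.1 + p.2 ≤ t}, F p)
        + ∫ p in Ioc (0:ℝ) (t - τ) ×ˢ Ioc (0:ℝ) τ, F p := by
  set T : Set (ℝ × ℝ) := {p | 0 ≤ p.1 ∧ 0 ≤ p.2 ∧ p.1 + p.2 ≤ t} with hTdef
  set S₁ : Set (ℝ × ℝ) := {p | 0 ≤ p.1 ∧ τ ≤ p.2 ∧ p.1 + p.2 ≤ t} with hS₁def
  set S₂ : Set (ℝ × ℝ) := {p | t - τ ≤ p.1 ∧ 0 ≤ p.2 ∧ p.1 + p.2 ≤ t} with hS₂def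
  set R : Set (ℝ × ℝ) := Ioc (0:ℝ) (t - τ) ×ˢ Ioc (0:ℝ) τ with hRdef
  have hsub1 : S₁ ⊆ T := by
    rintro p ⟨h1, h2, h3⟩; exact ⟨h1, le_trans hτ h2, h3⟩
  have hsub2 : S₂ ⊆ T := by
    rintro p ⟨h1, h2, h3⟩; exact ⟨by linarith, h2, h3⟩
  have hsubR : R ⊆ T := by
    rintro p ⟨h1, h2⟩
    exact ⟨h1.1.le, h2.1.le, by linarith [h1.2, h2.2]⟩
  have hTm : MeasurableSet T :=
    (measurableSet_le measurable_const measurable_fst).inter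
      ((measurableSet_le measurable_const measurable_snd).inter
        (measurableSet_le (measurable_fst.add measurable_snd) measurable_const))
  have hS₁m : MeasurableSet S₁ :=
    (measurableSet_le measurable_const measurable_fst).inter
      ((measurableSet_le measurable_const measurable_snd).inter
        (measurableSet_le (measurable_fst.add measurable_snd) measurable_const))
  have hS₂m : MeasurableSet S₂ :=
    (measurableSet_le measurable_const measurable_fst).inter
      ((measurableSet_le measurable_const measurable_snd).inter
        (measurableSet_le (measurable_fst.add measurable_snd) measurable_const))
  have hRm : MeasurableSet R := measurableSet_Ioc.prod measurableSet_Ioc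
  set Nset : Set (ℝ × ℝ) :=
    {p | p.1 = 0} ∪ ({p | p.2 = 0} ∪ ({p | p.2 = τ} ∪ ({p | p.1 = t - τ}
      ∪ {p | p.1 + p.2 = t}))) with hNdef
  have hNnull : (volume : Measure (ℝ × ℝ)) Nset = 0 := by
    rw [hNdef]
    refine measure_union_null (null_v 0) ?_
    refine measure_union_null (null_h 0) ?_
    refine measure_union_null (null_h τ) ?_
    exact measure_union_null (null_v (t - τ)) (null_diag t)
  have hae : ∀ᵐ p : ℝ × ℝ, p ∉ Nset := measure_eq_zero_iff_ae_notMem.1 hNnull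
  have hpt : ∀ p : ℝ × ℝ, p ∉ Nset →
      T.indicator F p = S₁.indicator F p + S₂.indicator F p + R.indicator F p := by
    intro p hp
    rw [hNdef] at hp
    simp only [Set.mem_union, Set.mem_setOf_eq, not_or] at hp
    obtain ⟨hp1, hp2, hp3, hp4, hp5⟩ := hp
    by_cases hpT : p ∈ T
    · obtain ⟨h1, h2, h3⟩ := hpT
      have h1' : 0 < p.1 := lt_of_le_of_ne h1 (Ne.symm hp1)
      have h2' : 0 < p.2 := lt_of_le_of_ne h2 (Ne.symm hp2)
      rw [Set.indicator_of_mem (show p ∈ T from ⟨h1, h2, h3⟩)]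
      rcases lt_or_gt_of_ne hp3 with hc | hc
      · have hnS₁ : p ∉ S₁ := fun hm => absurd hm.2.1 (not_le.2 hc)
        rcases lt_or_gt_of_ne hp4 with hd | hd
        · have hR : p ∈ R := ⟨⟨h1', hd.le⟩, ⟨h2', hc.le⟩⟩
          have hnS₂ : p ∉ S₂ := fun hm => absurd hm.1 (not_le.2 hd)
          rw [Set.indicator_of_notMem hnS₁, Set.indicator_of_notMem hnS₂,
            Set.indicator_of_mem hR]
          ring
        · have hS₂' : p ∈ S₂ := ⟨hd.le, h2, h3⟩
          have hnR : p ∉ R := fun hm => absurd hm.1.2 (not_le.2 hd)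
          rw [Set.indicator_of_notMem hnS₁, Set.indicator_of_mem hS₂',
            Set.indicator_of_notMem hnR]
          ring
      · have hS₁' : p ∈ S₁ := ⟨h1, hc.le, h3⟩
        have hnS₂ : p ∉ S₂ := fun hm => hp5 (le_antisymm h3 (by linarith [hm.1]))
        have hnR : p ∉ R := fun hm => absurd hm.2.2 (not_le.2 hc)
        rw [Set.indicator_of_mem hS₁', Set.indicator_of_notMem hnS₂,
          Set.indicator_of_notMem hnR]
        ring
    · have hnS₁ : p ∉ S₁ := fun hm => hpT (hsub1 hm)
      have hnS₂ : p ∉ S₂ := fun hm => hpT (hsub2 hm)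
      have hnR : p ∉ R := fun hm => hpT (hsubR hm)
      rw [Set.indicator_of_notMem hpT, Set.indicator_of_notMem hnS₁,
        Set.indicator_of_notMem hnS₂, Set.indicator_of_notMem hnR]
      ring
  have hi1 : Integrable (S₁.indicator F) (volume : Measure (ℝ × ℝ)) :=
    (integrable_indicator_iff hS₁m).2 (hT.mono_set hsub1)
  have hi2 : Integrable (S₂.indicator F) (volume : Measure (ℝ × ℝ)) :=
    (integrable_indicator_iff hS₂m).2 (hT.mono_set hsub2)
  have hiR : Integrable (R.indicator F) (volume : Measure (ℝ × ℝ)) :=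
    (integrable_indicator_iff hRm).2 (hT.mono_set hsubR)
  calc (∫ p in T, F p)
      = ∫ p : ℝ × ℝ, T.indicator F p := (integral_indicator hTm).symm
    _ = ∫ p : ℝ × ℝ, (S₁.indicator F p + S₂.indicator F p + R.indicator F p) := by
        apply integral_congr_ae
        filter_upwards [hae] with p hp
        exact hpt p hp
    _ = (∫ p : ℝ × ℝ, S₁.indicator F p) + (∫ p : ℝ × ℝ, S₂.indicator F p)
          + ∫ p : ℝ × ℝ, R.indicator F p := by
        have hi12 : Integrable (fun p : ℝ × ℝ => S₁.indicator F p + S₂.indicator F p)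
            (volume : Measure (ℝ × ℝ)) := hi1.add hi2
        rw [integral_add hi12 hiR, integral_add hi1 hi2]
    _ = (∫ p in S₁, F p) + (∫ p in S₂, F p) + ∫ p in R, F p := by
        rw [integral_indicator hS₁m, integral_indicator hS₂m, integral_indicator hRm]

/-- For `f,g,h ∈ L¹_loc(ℝ₊)`, `τ ≥ 0` and a.e. `t ≥ τ`:
`∫₀^{t−τ} h(t−s)(g*f)(s) ds + ∫₀^τ f(t−s)(g*h)(s) ds
  = (f*g*h)(t) − (g⁺ *₂ (f⊗h))(t−τ,τ)`. -/
theorem conv_split_identity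
    (f g h : ℝ → ℝ) (τ : ℝ) (hτ : 0 ≤ τ)
    (hf : LocallyIntegrableOn f (Set.Ici (0:ℝ)))
    (hg : LocallyIntegrableOn g (Set.Ici (0:ℝ)))
    (hh : LocallyIntegrableOn h (Set.Ici (0:ℝ))) :
    ∀ᵐ t : ℝ, τ ≤ t →
      (∫ s in (0:ℝ)..(t - τ), h (t - s) * conv g f s)
        + (∫ s in (0:ℝ)..τ, f (t - s) * conv g h s)
      = conv (conv f g) h t
        - ∫ r₁ in (0:ℝ)..(t - τ), ∫ r₂ in (0:ℝ)..τ,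
            g (t - r₁ - r₂) * (f r₁ * h r₂) := by
  have hprep : ∀ u : ℝ → ℝ, LocallyIntegrableOn u (Set.Ici (0:ℝ)) →
      AEStronglyMeasurable (restr u) (volume : Measure ℝ)
        ∧ ∀ N : ℝ, IntegrableOn (restr u) (Icc 0 N) := by
    intro u hu
    constructor
    · exact (aestronglyMeasurable_indicator_iff measurableSet_Ici).2 hu.aestronglyMeasurable
    · intro N
      have hsub : Icc (0:ℝ) N ⊆ Ici (0:ℝ) := fun x hx => hx.1
      have h1 : IntegrableOn u (Icc 0 N) :=
        hu.integrableOn_compact_subset hsub isCompact_Icc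
      exact (integrableOn_congr_fun
        (fun x hx => restr_eq u hx.1) measurableSet_Icc).2 h1
  obtain ⟨hfm, hfi⟩ := hprep f hf
  obtain ⟨hgm, hgi⟩ := hprep g hg
  obtain ⟨hhm, hhi⟩ := hprep h hh
  filter_upwards [ae_integrableOn_triangle (restr f) (restr g) (restr h)
    hfm hgm hhm hfi hgi hhi] with t hTint hτt
  have ht0 : (0:ℝ) ≤ t := le_trans hτ hτt
  have httτ : (0:ℝ) ≤ t - τ := by linarith
  set P : ℝ → ℝ → ℝ :=
    fun r₁ r₂ => restr f r₁ * restr g (t - r₁ - r₂) * restr h r₂ with hPdef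
  have hTint' : IntegrableOn (fun p : ℝ × ℝ => P p.1 p.2)
      {p : ℝ × ℝ | 0 ≤ p.1 ∧ 0 ≤ p.2 ∧ p.1 + p.2 ≤ t} := hTint
  have hsub1 : {p : ℝ × ℝ | 0 ≤ p.1 ∧ τ ≤ p.2 ∧ p.1 + p.2 ≤ t}
      ⊆ {p : ℝ × ℝ | 0 ≤ p.1 ∧ 0 ≤ p.2 ∧ p.1 + p.2 ≤ t} := by
    rintro p ⟨h1, h2, h3⟩; exact ⟨h1, le_trans hτ h2, h3⟩
  have hsub2 : {p : ℝ × ℝ | t - τ ≤ p.1 ∧ 0 ≤ p.2 ∧ p.1 + p.2 ≤ t}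
      ⊆ {p : ℝ × ℝ | 0 ≤ p.1 ∧ 0 ≤ p.2 ∧ p.1 + p.2 ≤ t} := by
    rintro p ⟨h1, h2, h3⟩; exact ⟨by linarith, h2, h3⟩
  have hsubR : Ioc (0:ℝ) (t - τ) ×ˢ Ioc (0:ℝ) τ
      ⊆ {p : ℝ × ℝ | 0 ≤ p.1 ∧ 0 ≤ p.2 ∧ p.1 + p.2 ≤ t} := by
    rintro p ⟨h1, h2⟩; exact ⟨h1.1.le, h2.1.le, by linarith [h1.2, h2.2]⟩
  -- E1 : the triple convolution
  have E1 : conv (conv f g) h t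
      = ∫ p in {p : ℝ × ℝ | 0 ≤ p.1 ∧ 0 ≤ p.2 ∧ p.1 + p.2 ≤ t}, P p.1 p.2 := by
    have step1 : conv (conv f g) h t = conv (conv (restr f) (restr g)) (restr h) t := by
      rw [conv_apply, conv_apply]
      apply intervalIntegral.integral_congr
      intro s hs
      rw [Set.uIcc_of_le ht0] at hs
      show conv f g (t - s) * h s = conv (restr f) (restr g) (t - s) * restr h s
      rw [← conv_restr f g (by linarith [hs.2] : (0:ℝ) ≤ t - s), restr_eq h hs.1]
    have step2 : conv (conv (restr f) (restr g)) (restr h) t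
        = ∫ r₂ in (0:ℝ)..t, ∫ r₁ in (0:ℝ)..(t - r₂), P r₁ r₂ := by
      rw [conv_apply]
      apply intervalIntegral.integral_congr
      intro r₂ _
      show conv (restr f) (restr g) (t - r₂) * restr h r₂
        = ∫ r₁ in (0:ℝ)..(t - r₂), P r₁ r₂
      simp only [hPdef]
      rw [conv_apply, conv_eq_aux, ← intervalIntegral.integral_mul_const]
      apply intervalIntegral.integral_congr
      intro r₁ _
      show restr f r₁ * restr g (t - r₂ - r₁) * restr h r₂
        = restr f r₁ * restr g (t - r₁ - r₂) * restr h r₂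
      rw [sub_right_comm t r₂ r₁]
    rw [step1, step2, ← slice1 P 0 t ht0 hTint']
  -- E2 : first left-hand term
  have E2 : (∫ s in (0:ℝ)..(t - τ), h (t - s) * conv g f s)
      = ∫ p in {p : ℝ × ℝ | 0 ≤ p.1 ∧ τ ≤ p.2 ∧ p.1 + p.2 ≤ t}, P p.1 p.2 := by
    have step1 : (∫ s in (0:ℝ)..(t - τ), h (t - s) * conv g f s)
        = ∫ s in (0:ℝ)..(t - τ), restr h (t - s) * conv (restr g) (restr f) s := by
      apply intervalIntegral.integral_congr
      intro s hs
      rw [Set.uIcc_of_le httτ] at hs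
      show h (t - s) * conv g f s = restr h (t - s) * conv (restr g) (restr f) s
      rw [← conv_restr g f hs.1, restr_eq h (by linarith [hs.2])]
    have step2 : (∫ s in (0:ℝ)..(t - τ), restr h (t - s) * conv (restr g) (restr f) s)
        = ∫ r₂ in τ..t, restr h r₂ * conv (restr g) (restr f) (t - r₂) := by
      have h2 := intervalIntegral.integral_comp_sub_left (a := (0:ℝ)) (b := t - τ)
        (fun r₂ => restr h r₂ * conv (restr g) (restr f) (t - r₂)) t
      simp only [sub_sub_cancel, sub_zero] at h2
      exact h2
    have step3 : (∫ r₂ in τ..t, restr h r₂ * conv (restr g) (restr f) (t - r₂))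
        = ∫ r₂ in τ..t, ∫ r₁ in (0:ℝ)..(t - r₂), P r₁ r₂ := by
      apply intervalIntegral.integral_congr
      intro r₂ _
      show restr h r₂ * conv (restr g) (restr f) (t - r₂)
        = ∫ r₁ in (0:ℝ)..(t - r₂), P r₁ r₂
      simp only [hPdef]
      rw [conv_apply, ← intervalIntegral.integral_const_mul]
      apply intervalIntegral.integral_congr
      intro r₁ _
      show restr h r₂ * (restr g (t - r₂ - r₁) * restr f r₁)
        = restr f r₁ * restr g (t - r₁ - r₂) * restr h r₂
      rw [sub_right_comm t r₂ r₁]; ring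
    rw [step1, step2, step3, ← slice1 P τ t hτt (hTint'.mono_set hsub1)]
  -- E3 : second left-hand term
  have E3 : (∫ s in (0:ℝ)..τ, f (t - s) * conv g h s)
      = ∫ p in {p : ℝ × ℝ | t - τ ≤ p.1 ∧ 0 ≤ p.2 ∧ p.1 + p.2 ≤ t}, P p.1 p.2 := by
    have step1 : (∫ s in (0:ℝ)..τ, f (t - s) * conv g h s)
        = ∫ s in (0:ℝ)..τ, restr f (t - s) * conv (restr g) (restr h) s := by
      apply intervalIntegral.integral_congr
      intro s hs
      rw [Set.uIcc_of_le hτ] at hs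
      show f (t - s) * conv g h s = restr f (t - s) * conv (restr g) (restr h) s
      rw [← conv_restr g h hs.1, restr_eq f (by linarith [hs.2])]
    have step2 : (∫ s in (0:ℝ)..τ, restr f (t - s) * conv (restr g) (restr h) s)
        = ∫ r₁ in (t - τ)..t, restr f r₁ * conv (restr g) (restr h) (t - r₁) := by
      have h2 := intervalIntegral.integral_comp_sub_left (a := (0:ℝ)) (b := τ)
        (fun r₁ => restr f r₁ * conv (restr g) (restr h) (t - r₁)) t
      simp only [sub_sub_cancel, sub_zero] at h2
      exact h2
    have step3 : (∫ r₁ in (t - τ)..t, restr f r₁ * conv (restr g) (restr h) (t - r₁))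
        = ∫ r₁ in (t - τ)..t, ∫ r₂ in (0:ℝ)..(t - r₁), P r₁ r₂ := by
      apply intervalIntegral.integral_congr
      intro r₁ _
      show restr f r₁ * conv (restr g) (restr h) (t - r₁)
        = ∫ r₂ in (0:ℝ)..(t - r₁), P r₁ r₂
      simp only [hPdef]
      rw [conv_apply, ← intervalIntegral.integral_const_mul]
      apply intervalIntegral.integral_congr
      intro r₂ _
      show restr f r₁ * (restr g (t - r₁ - r₂) * restr h r₂)
        = restr f r₁ * restr g (t - r₁ - r₂) * restr h r₂
      ring
    rw [step1, step2, step3,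
      ← slice2 P (t - τ) t (by linarith) (hTint'.mono_set hsub2)]
  -- E4 : the rectangle term
  have E4 : (∫ r₁ in (0:ℝ)..(t - τ), ∫ r₂ in (0:ℝ)..τ, g (t - r₁ - r₂) * (f r₁ * h r₂))
      = ∫ p in Ioc (0:ℝ) (t - τ) ×ˢ Ioc (0:ℝ) τ, P p.1 p.2 := by
    have step1 : (∫ r₁ in (0:ℝ)..(t - τ), ∫ r₂ in (0:ℝ)..τ, g (t - r₁ - r₂) * (f r₁ * h r₂))
        = ∫ r₁ in (0:ℝ)..(t - τ), ∫ r₂ in (0:ℝ)..τ, P r₁ r₂ := by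
      apply intervalIntegral.integral_congr
      intro r₁ h1
      rw [Set.uIcc_of_le httτ] at h1
      show (∫ r₂ in (0:ℝ)..τ, g (t - r₁ - r₂) * (f r₁ * h r₂))
        = ∫ r₂ in (0:ℝ)..τ, P r₁ r₂
      apply intervalIntegral.integral_congr
      intro r₂ h2
      rw [Set.uIcc_of_le hτ] at h2
      show g (t - r₁ - r₂) * (f r₁ * h r₂) = P r₁ r₂
      simp only [hPdef]
      rw [← restr_eq f h1.1, ← restr_eq h h2.1,
        ← restr_eq g (by linarith [h1.2, h2.2] : (0:ℝ) ≤ t - r₁ - r₂)]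
      ring
    have hRint : IntegrableOn (fun p : ℝ × ℝ => P p.1 p.2)
        (Ioc (0:ℝ) (t - τ) ×ˢ Ioc (0:ℝ) τ) := hTint'.mono_set hsubR
    have hprod := MeasureTheory.setIntegral_prod (μ := (volume : Measure ℝ))
      (ν := (volume : Measure ℝ)) (s := Ioc (0:ℝ) (t - τ)) (t := Ioc (0:ℝ) τ)
      (fun p : ℝ × ℝ => P p.1 p.2)
      (by rwa [Measure.volume_eq_prod] at hRint)
    rw [step1, intervalIntegral.integral_of_le httτ]
    rw [show (∫ p in Ioc (0:ℝ) (t - τ) ×ˢ Ioc (0:ℝ) τ, P p.1 p.2)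
        = ∫ p in Ioc (0:ℝ) (t - τ) ×ˢ Ioc (0:ℝ) τ, P p.1 p.2
          ∂((volume : Measure ℝ).prod volume) from by rw [← Measure.volume_eq_prod]]
    rw [hprod]
    apply setIntegral_congr_fun measurableSet_Ioc
    intro r₁ _
    show (∫ r₂ in (0:ℝ)..τ, P r₁ r₂) = ∫ r₂ in Ioc (0:ℝ) τ, P r₁ r₂
    rw [intervalIntegral.integral_of_le hτ]
  -- E5 : the region decomposition
  have E5 := region_split (fun p : ℝ × ℝ => P p.1 p.2) τ t hτ hτt hTint'
  rw [E2, E3, E1, E4, E5]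
  ring
end
end

section
/- Let X be a complex Banach space and c ∈ L¹_loc(ℝ₊, X) be Laplace transformable (abscissa ω_c), absolutely continuous on (0,∞) and differentiable almost everywhere, with derivative c'. If (c')⁺(t,s) := c'(t+s) is 2-Laplace transformable, then for all λ, μ with Re λ > ω_c, Re μ > ω_c, λ ≠ μ (lying in the region of convergence of L₂((c')⁺)), L₂((c')⁺)(λ,μ) = (λ ĉ(λ) − μ ĉ(μ))/(μ − λ). -/
open MeasureTheory Filter Set Topology Complex

noncomputable section


namespace DLapAux

variable {X : Type*} [NormedAddCommGroup X] [NormedSpace ℂ X]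

lemma smul_intInt {φ : ℝ → ℂ} (hφ : Continuous φ) {g : ℝ → X} {a b : ℝ}
    (hg : IntervalIntegrable g volume a b) :
    IntervalIntegrable (fun t => φ t • g t) volume a b := by
  rw [intervalIntegrable_iff] at hg ⊢
  obtain ⟨M, hM⟩ : ∃ M, ∀ x ∈ Set.uIcc a b, ‖φ x‖ ≤ M :=
    isCompact_uIcc.exists_bound_of_continuousOn hφ.continuousOn
  refine (hg.norm.const_mul M).mono'
    ((hφ.aestronglyMeasurable.restrict).smul hg.aestronglyMeasurable) ?_
  refine (ae_restrict_mem measurableSet_uIoc).mono fun x hx => ?_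
  rw [norm_smul]
  exact mul_le_mul_of_nonneg_right (hM x (uIoc_subset_uIcc hx)) (norm_nonneg _)

lemma triangle_swap [CompleteSpace X] {a b : ℝ} (hab : a ≤ b) {φ : ℝ → ℂ} (hφ : Continuous φ)
    {g : ℝ → X} (hg : IntegrableOn g (Set.Ioc a b)) :
    ∫ r in Set.Ioc a b, (∫ u in Set.Ioc r b, φ u) • g r
      = ∫ u in Set.Ioc a b, φ u • ∫ r in Set.Ioc a u, g r := by
  set μ := volume.restrict (Set.Ioc a b) with hμ
  set F : ℝ → ℝ → X := fun r u => if r < u then φ u • g r else 0 with hF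
  have hφint : Integrable φ μ := hφ.integrableOn_Ioc
  have hFint : Integrable (Function.uncurry F) (μ.prod μ) := by
    have h1 : Integrable (fun z : ℝ × ℝ => φ z.2 • g z.1) (μ.prod μ) := by
      have := (Integrable.smul_prod hφint hg).swap
      exact this
    have h2 : MeasurableSet {z : ℝ × ℝ | z.1 < z.2} :=
      measurableSet_lt measurable_fst measurable_snd
    have : Function.uncurry F
        = Set.indicator {z : ℝ × ℝ | z.1 < z.2} (fun z => φ z.2 • g z.1) := by
      ext z
      by_cases h : z.1 < z.2 <;>
        simp [Function.uncurry, hF, h, Set.indicator_of_mem, Set.indicator_of_notMem]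
    rw [this]
    exact h1.indicator h2
  have swap := MeasureTheory.integral_integral_swap (f := F) hFint
  have hL : ∀ r ∈ Set.Ioc a b, (∫ u, F r u ∂μ) = (∫ u in Set.Ioc r b, φ u) • g r := by
    intro r hr
    have : ∀ u, F r u = Set.indicator (Set.Ioi r) (fun u => φ u • g r) u := by
      intro u
      by_cases h : r < u <;> simp [hF, h, Set.indicator_of_mem, Set.indicator_of_notMem]
    rw [hμ]
    simp_rw [this]
    rw [integral_indicator measurableSet_Ioi, Measure.restrict_restrict measurableSet_Ioi]
    have hset : Set.Ioi r ∩ Set.Ioc a b = Set.Ioc r b := by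
      ext x
      simp only [Set.mem_inter_iff, Set.mem_Ioi, Set.mem_Ioc]
      constructor
      · rintro ⟨h1, _, h3⟩; exact ⟨h1, h3⟩
      · rintro ⟨h1, h3⟩; exact ⟨h1, hr.1.trans h1, h3⟩
    rw [hset, integral_smul_const]
  have hR : ∀ u ∈ Set.Ioc a b, (∫ r, F r u ∂μ) = φ u • ∫ r in Set.Ioc a u, g r := by
    intro u hu
    have : ∀ r, F r u = Set.indicator (Set.Iio u) (fun r => φ u • g r) r := by
      intro r
      by_cases h : r < u <;> simp [hF, h, Set.indicator_of_mem, Set.indicator_of_notMem]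
    rw [hμ]
    simp_rw [this]
    rw [integral_indicator measurableSet_Iio, Measure.restrict_restrict measurableSet_Iio]
    have hset : Set.Iio u ∩ Set.Ioc a b = Set.Ioo a u := by
      ext x
      simp only [Set.mem_inter_iff, Set.mem_Iio, Set.mem_Ioc, Set.mem_Ioo]
      constructor
      · rintro ⟨h1, h2, _⟩; exact ⟨h2, h1⟩
      · rintro ⟨h2, h1⟩; exact ⟨h1, h2, (le_of_lt h1).trans hu.2⟩
    rw [hset, integral_smul, ← MeasureTheory.integral_Ioc_eq_integral_Ioo]
  calc ∫ r in Set.Ioc a b, (∫ u in Set.Ioc r b, φ u) • g r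
      = ∫ r, ∫ u, F r u ∂μ ∂μ := (setIntegral_congr_fun measurableSet_Ioc
        (fun r hr => (hL r hr).symm))
    _ = ∫ u, ∫ r, F r u ∂μ ∂μ := swap
    _ = ∫ u in Set.Ioc a b, φ u • ∫ r in Set.Ioc a u, g r :=
        setIntegral_congr_fun measurableSet_Ioc hR

end DLapAux

namespace DLapAux

variable {X : Type*} [NormedAddCommGroup X] [NormedSpace ℂ X]

lemma ibp [CompleteSpace X] {a b : ℝ} (hab : a ≤ b) {φ φd : ℝ → ℂ}
    (hφ : ∀ x, HasDerivAt φ (φd x) x) (hφd : Continuous φd)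
    {g G : ℝ → X} (hg : IntervalIntegrable g volume a b)
    (hGi : IntegrableOn G (Set.Ioc a b))
    (hG : ∀ r, a ≤ r → r ≤ b → G r - G a = ∫ u in a..r, g u) :
    ∫ r in a..b, φ r • g r
      = φ b • G b - φ a • G a - ∫ u in a..b, φd u • G u := by
  have hφc : Continuous φ := by
    refine continuous_iff_continuousAt.2 fun x => (hφ x).continuousAt
  have hFTC : ∀ r : ℝ, (∫ u in r..b, φd u) = φ b - φ r := fun r =>
    intervalIntegral.integral_eq_sub_of_hasDerivAt (fun u _ => hφ u)
      (hφd.intervalIntegrable r b)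
  have hgo : IntegrableOn g (Set.Ioc a b) :=
    (intervalIntegrable_iff_integrableOn_Ioc_of_le hab).1 hg
  have hsplit : ∀ r : ℝ, φ r • g r = φ b • g r - (∫ u in r..b, φd u) • g r := by
    intro r; rw [hFTC r, sub_smul, sub_sub_cancel]
  have hint2 : IntervalIntegrable (fun r => (∫ u in r..b, φd u) • g r) volume a b := by
    refine smul_intInt ?_ hg
    have : (fun r => ∫ u in r..b, φd u) = fun r => φ b - φ r := funext hFTC
    rw [this]; exact continuous_const.sub hφc
  have step1 : ∫ r in a..b, φ r • g r
      = φ b • (G b - G a) - ∫ r in a..b, (∫ u in r..b, φd u) • g r := by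
    rw [hG b hab le_rfl, ← intervalIntegral.integral_smul]
    rw [← intervalIntegral.integral_sub (smul_intInt continuous_const hg) hint2]
    exact intervalIntegral.integral_congr fun r _ => hsplit r
  have step2 : ∫ r in a..b, (∫ u in r..b, φd u) • g r
      = ∫ u in a..b, φd u • (G u - G a) := by
    rw [intervalIntegral.integral_of_le hab, intervalIntegral.integral_of_le hab]
    calc ∫ r in Set.Ioc a b, (∫ u in r..b, φd u) • g r
        = ∫ r in Set.Ioc a b, (∫ u in Set.Ioc r b, φd u) • g r := by
          refine setIntegral_congr_fun measurableSet_Ioc fun r hr => ?_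
          rw [intervalIntegral.integral_of_le hr.2]
      _ = ∫ u in Set.Ioc a b, φd u • ∫ r in Set.Ioc a u, g r := triangle_swap hab hφd hgo
      _ = ∫ u in Set.Ioc a b, φd u • (G u - G a) := by
          refine setIntegral_congr_fun measurableSet_Ioc fun u hu => ?_
          rw [hG u hu.1.le hu.2, intervalIntegral.integral_of_le hu.1.le]
  have hGIi : IntervalIntegrable (fun u => φd u • G u) volume a b :=
    smul_intInt hφd ((intervalIntegrable_iff_integrableOn_Ioc_of_le hab).2 hGi)
  have step3 : ∫ u in a..b, φd u • (G u - G a)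
      = (∫ u in a..b, φd u • G u) - (φ b - φ a) • G a := by
    simp_rw [smul_sub]
    rw [intervalIntegral.integral_sub hGIi (smul_intInt hφd intervalIntegrable_const),
      intervalIntegral.integral_smul_const, hFTC a]
  rw [step1, step2, step3, smul_sub, sub_smul]
  abel

end DLapAux

namespace DLapAux

variable {X : Type*} [NormedAddCommGroup X] [NormedSpace ℂ X]

lemma expc_cont (z : ℂ) : Continuous fun t : ℝ => Complex.exp (-(z * t)) :=
  Complex.continuous_exp.comp ((continuous_const.mul Complex.continuous_ofReal).neg)

lemma expc_deriv (z : ℂ) (x : ℝ) :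
    HasDerivAt (fun t : ℝ => Complex.exp (-(z * t))) (-z * Complex.exp (-(z * x))) x := by
  have h0 : HasDerivAt (fun t : ℝ => (t : ℂ)) 1 x := Complex.ofRealCLM.hasDerivAt
  have h1 : HasDerivAt (fun t : ℝ => -(z * t)) (-z) x := by
    have h := (h0.const_mul z).neg; rw [mul_one] at h; exact h
  simpa [mul_comm] using h1.cexp

lemma ibp_exp [CompleteSpace X] {a b : ℝ} (hab : a ≤ b) (z : ℂ)
    {g G : ℝ → X} (hg : IntervalIntegrable g volume a b)
    (hGi : IntegrableOn G (Set.Ioc a b))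
    (hG : ∀ r, a ≤ r → r ≤ b → G r - G a = ∫ u in a..r, g u) :
    ∫ r in a..b, Complex.exp (-(z * r)) • g r
      = Complex.exp (-(z * b)) • G b - Complex.exp (-(z * a)) • G a
        + z • ∫ u in a..b, Complex.exp (-(z * u)) • G u := by
  have h := ibp hab (φ := fun t => Complex.exp (-(z * t)))
    (φd := fun t => -z * Complex.exp (-(z * t))) (fun x => expc_deriv z x)
    (continuous_const.mul (expc_cont z)) hg hGi hG
  rw [h]
  have : ∫ u in a..b, (-z * Complex.exp (-(z * u))) • G u
      = (-z) • ∫ u in a..b, Complex.exp (-(z * u)) • G u := by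
    rw [← intervalIntegral.integral_smul]
    exact intervalIntegral.integral_congr fun u _ => (mul_smul _ _ _)
  rw [this, neg_smul, sub_neg_eq_add]

lemma ibp_exp' [CompleteSpace X] {a b : ℝ} (hab : a ≤ b) {z : ℂ} (hz : z ≠ 0)
    {g G : ℝ → X} (hg : IntervalIntegrable g volume a b)
    (hGi : IntegrableOn G (Set.Ioc a b))
    (hG : ∀ r, a ≤ r → r ≤ b → G r - G a = ∫ u in a..r, g u) :
    ∫ u in a..b, Complex.exp (-(z * u)) • G u
      = z⁻¹ • (Complex.exp (-(z * a)) • G a - Complex.exp (-(z * b)) • G b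
          + ∫ r in a..b, Complex.exp (-(z * r)) • g r) := by
  have h := ibp_exp hab z hg hGi hG
  have h2 : z • ∫ u in a..b, Complex.exp (-(z * u)) • G u
      = Complex.exp (-(z * a)) • G a - Complex.exp (-(z * b)) • G b
          + ∫ r in a..b, Complex.exp (-(z * r)) • g r := by
    rw [h]; abel
  rw [← h2, smul_smul, inv_mul_cancel₀ hz, one_smul]

end DLapAux

open DLapAux

set_option maxHeartbeats 1000000

/-- Let `c ∈ L¹_loc(ℝ₊,X)` be Laplace transformable (abscissa `ω`,
transform `C`), absolutely continuous on `(0,∞)` and a.e. differentiable with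
derivative `c'`. If `(c')⁺(t,s) = c'(t+s)` is 2-Laplace transformable (abscissas
`ω₁, ω₂`, transform `G`), then for `Re λ, Re μ > ω` with `λ ≠ μ` in the region of
convergence, `L₂((c')⁺)(λ,μ) = (λ ĉ(λ) − μ ĉ(μ))/(μ − λ)`. -/
theorem doubleLaplace_deriv_plus
    {X : Type*} [NormedAddCommGroup X] [NormedSpace ℂ X]
    (c c' : ℝ → X)
    (hcloc : LocallyIntegrableOn c (Set.Ici (0:ℝ)))
    (hc'loc : LocallyIntegrableOn c' (Set.Ioi (0:ℝ)))
    -- `c` is absolutely continuous on `(0,∞)` with derivative `c'` (FTC form):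
    (hAC : ∀ s t : ℝ, 0 < s → s ≤ t → c t - c s = ∫ u in s..t, c' u)
    -- `c` is differentiable a.e. on `(0,∞)` with derivative `c'`:
    (hdiff : ∀ᵐ t : ℝ, 0 < t → HasDerivAt c (c' t) t)
    (ω : ℝ) (C : ℂ → X)
    (hc : ∀ lam : ℂ, ω < lam.re →
      Tendsto (fun T : ℝ => ∫ t in (0:ℝ)..T, Complex.exp (-(lam * t)) • c t)
        atTop (nhds (C lam)))
    (ω₁ ω₂ : ℝ) (G : ℂ → ℂ → X)
    (hG : ∀ lam mu : ℂ, ω₁ < lam.re → ω₂ < mu.re →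
      Tendsto (fun T : ℝ => ∫ t in (0:ℝ)..T, ∫ s in (0:ℝ)..T,
          Complex.exp (-(lam * t) - mu * s) • c' (t + s))
        atTop (nhds (G lam mu)))
    (lam mu : ℂ) (hl : ω < lam.re) (hm : ω < mu.re)
    (hl₁ : ω₁ < lam.re) (hm₂ : ω₂ < mu.re) (hne : lam ≠ mu) :
    G lam mu = (mu - lam)⁻¹ • (lam • C lam - mu • C mu) := by
  by_cases hX : CompleteSpace X
  case neg =>
    have hz : ∀ (f : ℝ → X) (μ : Measure ℝ), ∫ a, f a ∂μ = 0 := fun f μ => by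
      rw [MeasureTheory.integral_def]; exact dif_neg hX
    have hz' : ∀ (f : ℝ → X) (a b : ℝ), ∫ x in a..b, f x = 0 := fun f a b => by
      rw [intervalIntegral]; rw [hz, hz, sub_zero]
    have hC : ∀ ν : ℂ, ω < ν.re → C ν = 0 := fun ν hν => by
      refine tendsto_nhds_unique (hc ν hν) ?_
      simpa [hz'] using (tendsto_const_nhds : Tendsto (fun _ : ℝ => (0:X)) atTop (nhds 0))
    have hG0 : G lam mu = 0 := by
      refine tendsto_nhds_unique (hG lam mu hl₁ hm₂) ?_
      simpa [hz'] using (tendsto_const_nhds : Tendsto (fun _ : ℝ => (0:X)) atTop (nhds 0))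
    rw [hG0, hC lam hl, hC mu hm]
    simp
  case pos =>
    haveI := hX
    set B : ℂ → ℝ → X := fun ν T => ∫ t in (0:ℝ)..T, Complex.exp (-(ν * t)) • c t with hBdef
    set k : ℂ := (mu - lam)⁻¹ with hk
    set ν : ℂ := lam - mu with hν
    have hν0 : ν ≠ 0 := sub_ne_zero.2 hne
    -- basic integrability facts
    have hcint : ∀ a b : ℝ, 0 ≤ a → 0 ≤ b → IntervalIntegrable c volume a b := by
      intro a b ha hb
      refine (hcloc.integrableOn_compact_subset ?_ isCompact_uIcc).intervalIntegrable
      intro x hx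
      exact le_trans (le_min ha hb) hx.1
    have hc'int : ∀ a b : ℝ, 0 < a → 0 < b → IntervalIntegrable c' volume a b := by
      intro a b ha hb
      refine (hc'loc.integrableOn_compact_subset ?_ isCompact_uIcc).intervalIntegrable
      intro x hx
      exact lt_of_lt_of_le (lt_min ha hb) hx.1
    have hgint : ∀ (z : ℂ) (a b : ℝ), 0 ≤ a → 0 ≤ b →
        IntervalIntegrable (fun t : ℝ => Complex.exp (-(z * t)) • c t) volume a b :=
      fun z a b ha hb => smul_intInt (expc_cont z) (hcint a b ha hb)
    have hg'int : ∀ (z : ℂ) (a b : ℝ), 0 < a → 0 < b →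
        IntervalIntegrable (fun t : ℝ => Complex.exp (-(z * t)) • c' t) volume a b :=
      fun z a b ha hb => smul_intInt (expc_cont z) (hc'int a b ha hb)
    have hBadd : ∀ (z : ℂ) (a b : ℝ), 0 ≤ a → 0 ≤ b →
        B z b - B z a = ∫ t in a..b, Complex.exp (-(z * t)) • c t := fun z a b ha hb =>
      intervalIntegral.integral_interval_sub_left (hgint z 0 b le_rfl hb) (hgint z 0 a le_rfl ha)
    have hB0 : ∀ z : ℂ, B z 0 = 0 := fun z => intervalIntegral.integral_same
    have hBcont : ∀ z : ℂ, ContinuousOn (B z) (Set.Ici (0:ℝ)) := by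
      intro z x hx
      have hx0 : (0:ℝ) ≤ x := hx
      have hxx : (0:ℝ) ≤ x + 1 := by linarith
      have hio : IntegrableOn (fun t : ℝ => Complex.exp (-(z * t)) • c t) (Set.Icc 0 (x+1)) volume := by
        rw [integrableOn_Icc_iff_integrableOn_Ioc]
        exact (intervalIntegrable_iff_integrableOn_Ioc_of_le hxx).1 (hgint z 0 (x+1) le_rfl hxx)
      have h1 : ContinuousOn (B z) (Set.uIcc 0 (x+1)) :=
        intervalIntegral.continuousOn_primitive_interval (by rwa [Set.uIcc_of_le hxx])
      rw [Set.uIcc_of_le hxx] at h1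
      have hmem : Set.Icc (0:ℝ) (x+1) ∈ nhdsWithin x (Set.Ici 0) := by
        rw [← Set.Ici_inter_Iic]
        exact Filter.inter_mem self_mem_nhdsWithin
          (mem_nhdsWithin_of_mem_nhds (Iic_mem_nhds (by linarith)))
      exact (h1 x ⟨hx0, by linarith⟩).mono_of_mem_nhdsWithin hmem
    -- the tail estimate
    have hnormexp : ∀ (z : ℂ) (T : ℝ), ‖Complex.exp (z * T)‖ = Real.exp (z.re * T) := by
      intro z T
      rw [Complex.norm_exp]
      congr 1
      simp [Complex.mul_re]
    have hnormexp' : ∀ (z : ℂ) (T : ℝ), ‖Complex.exp (-(z * T))‖ = Real.exp (-(z.re * T)) := by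
      intro z T
      rw [← neg_mul, hnormexp (-z) T]
      simp
    have tail : ∀ p q : ℂ, ω < p.re → ω < q.re →
        Tendsto (fun T : ℝ => Complex.exp ((p - q) * T) • (B p (2*T) - B p T)) atTop (nhds 0) := by
      intro p q hp hq
      have h2T : Tendsto (fun T : ℝ => 2 * T) atTop atTop :=
        Tendsto.const_mul_atTop two_pos tendsto_id
      have hΔ : Tendsto (fun T : ℝ => B p (2*T) - B p T) atTop (nhds 0) := by
        have := ((hc p hp).comp h2T).sub (hc p hp)
        rwa [sub_self] at this
      by_cases hpq : p.re ≤ q.re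
      · refine squeeze_zero_norm' ?_
          (show Tendsto (fun T : ℝ => ‖B p (2*T) - B p T‖) atTop (nhds 0) by
            simpa using hΔ.norm)
        filter_upwards [eventually_ge_atTop (0:ℝ)] with T hT
        rw [norm_smul, hnormexp]
        have h1 : Real.exp ((p - q).re * T) ≤ 1 := by
          rw [Real.exp_le_one_iff]
          have h2 : (p - q).re ≤ 0 := by
            rw [Complex.sub_re]; linarith
          exact mul_nonpos_of_nonpos_of_nonneg h2 hT
        exact mul_le_of_le_one_left (norm_nonneg _) h1
      · push_neg at hpq
        set a : ℝ := (ω + q.re)/2 with ha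
        have ha1 : ω < a := by rw [ha]; linarith
        have ha2 : a < q.re := by rw [ha]; linarith
        have ha3 : a < p.re := lt_trans ha2 hpq
        have hare : ((a:ℂ)).re = a := by simp
        have hpare : (p - (a:ℂ)).re = p.re - a := by simp
        set β : ℝ := p.re - a with hβdef
        have hβ : 0 < β := by rw [hβdef]; linarith
        obtain ⟨T₀, hT₀⟩ : ∃ T₀ : ℝ, ∀ x ≥ T₀, ‖B (a:ℂ) x‖ ≤ ‖C (a:ℂ)‖ + 1 := by
          obtain ⟨T₀, h⟩ := Metric.tendsto_atTop.1 (hc (a:ℂ) (by rwa [hare])) 1 one_pos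
          refine ⟨T₀, fun x hx => ?_⟩
          have hb := h x hx
          rw [dist_eq_norm] at hb
          calc ‖B (a:ℂ) x‖ = ‖B (a:ℂ) x - C (a:ℂ) + C (a:ℂ)‖ := by rw [sub_add_cancel]
            _ ≤ ‖B (a:ℂ) x - C (a:ℂ)‖ + ‖C (a:ℂ)‖ := norm_add_le _ _
            _ ≤ ‖C (a:ℂ)‖ + 1 := by linarith
        set M : ℝ := ‖C (a:ℂ)‖ + 1 with hMdef
        have hM0 : 0 ≤ M := by positivity
        have hbound : ∀ T : ℝ, max T₀ 0 ≤ T →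
            ‖Complex.exp ((p - q) * T) • (B p (2*T) - B p T)‖
              ≤ (2*M + ‖p - (a:ℂ)‖ * M * T) * Real.exp ((a - q.re) * T) := by
          intro T hT
          have hTT0 : T₀ ≤ T := le_trans (le_max_left _ _) hT
          have hT0 : (0:ℝ) ≤ T := le_trans (le_max_right _ _) hT
          have hT2 : T ≤ 2*T := by linarith
          have hT20 : (0:ℝ) ≤ 2*T := by linarith
          have hdelta : B p (2*T) - B p T
              = Complex.exp (-((p - (a:ℂ)) * ((2*T : ℝ) : ℂ))) • B (a:ℂ) (2*T)
                - Complex.exp (-((p - (a:ℂ)) * T)) • B (a:ℂ) T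
                + (p - (a:ℂ)) • ∫ u in T..(2*T), Complex.exp (-((p - (a:ℂ)) * u)) • B (a:ℂ) u := by
            rw [hBadd p T (2*T) hT0 hT20]
            rw [show (∫ t in T..(2*T), Complex.exp (-(p * t)) • c t)
                = ∫ t in T..(2*T), Complex.exp (-((p - (a:ℂ)) * t)) •
                    (Complex.exp (-((a:ℂ) * t)) • c t) from
              intervalIntegral.integral_congr fun t _ => by
                rw [smul_smul, ← Complex.exp_add]
                congr 2
                push_cast
                ring]
            exact ibp_exp hT2 (p - (a:ℂ)) (hgint (a:ℂ) T (2*T) hT0 hT20)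
              (((ContinuousOn.mono (hBcont (a:ℂ))
                  (fun x hx => le_trans hT0 hx.1 : Set.Icc T (2*T) ⊆ Set.Ici 0)).integrableOn_compact
                isCompact_Icc).mono_set Set.Ioc_subset_Icc_self)
              (fun r h1 h2 => hBadd (a:ℂ) T r hT0 (le_trans hT0 h1))
          have hb1 : ‖Complex.exp (-((p - (a:ℂ)) * ((2*T : ℝ) : ℂ))) • B (a:ℂ) (2*T)‖
              ≤ Real.exp (-(β * T)) * M := by
            rw [norm_smul, hnormexp', hpare]
            apply mul_le_mul _ (hT₀ (2*T) (by linarith)) (norm_nonneg _) (Real.exp_pos _).le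
            apply Real.exp_le_exp.2
            rw [hβdef]
            nlinarith
          have hb2 : ‖Complex.exp (-((p - (a:ℂ)) * T)) • B (a:ℂ) T‖
              ≤ Real.exp (-(β * T)) * M := by
            rw [norm_smul, hnormexp', hpare]
            exact mul_le_mul le_rfl (hT₀ T hTT0) (norm_nonneg _) (Real.exp_pos _).le
          have hb3 : ‖(p - (a:ℂ)) • ∫ u in T..(2*T),
              Complex.exp (-((p - (a:ℂ)) * u)) • B (a:ℂ) u‖
              ≤ ‖p - (a:ℂ)‖ * (Real.exp (-(β * T)) * M * T) := by
            rw [norm_smul]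
            apply mul_le_mul_of_nonneg_left _ (norm_nonneg _)
            have hC := intervalIntegral.norm_integral_le_of_norm_le_const
              (C := Real.exp (-(β * T)) * M) (a := T) (b := 2*T)
              (f := fun u => Complex.exp (-((p - (a:ℂ)) * u)) • B (a:ℂ) u) ?_
            · calc ‖∫ u in T..(2*T), Complex.exp (-((p - (a:ℂ)) * u)) • B (a:ℂ) u‖
                  ≤ Real.exp (-(β * T)) * M * |2*T - T| := hC
                _ = Real.exp (-(β * T)) * M * T := by
                    rw [show 2*T - T = T by ring, _root_.abs_of_nonneg hT0]
            · intro x hx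
              rw [Set.uIoc_of_le hT2] at hx
              rw [norm_smul, hnormexp', hpare]
              apply mul_le_mul _ (hT₀ x (le_trans hTT0 hx.1.le)) (norm_nonneg _)
                (Real.exp_pos _).le
              apply Real.exp_le_exp.2
              rw [hβdef]
              nlinarith [hx.1.le]
          have hΔb : ‖B p (2*T) - B p T‖
              ≤ (2*M + ‖p - (a:ℂ)‖ * M * T) * Real.exp (-(β * T)) := by
            rw [hdelta]
            calc ‖_ - _ + _‖ ≤ ‖_ - _‖ + ‖_‖ := norm_add_le _ _
              _ ≤ ‖_‖ + ‖_‖ + ‖_‖ := add_le_add (norm_sub_le _ _) le_rfl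
              _ ≤ Real.exp (-(β * T)) * M + Real.exp (-(β * T)) * M
                  + ‖p - (a:ℂ)‖ * (Real.exp (-(β * T)) * M * T) :=
                add_le_add (add_le_add hb1 hb2) hb3
              _ = (2*M + ‖p - (a:ℂ)‖ * M * T) * Real.exp (-(β * T)) := by ring
          calc ‖Complex.exp ((p - q) * T) • (B p (2*T) - B p T)‖
              = Real.exp ((p - q).re * T) * ‖B p (2*T) - B p T‖ := by
                rw [norm_smul, hnormexp]
            _ ≤ Real.exp ((p - q).re * T) *
                ((2*M + ‖p - (a:ℂ)‖ * M * T) * Real.exp (-(β * T))) :=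
                mul_le_mul_of_nonneg_left hΔb (Real.exp_pos _).le
            _ = (2*M + ‖p - (a:ℂ)‖ * M * T) *
                (Real.exp ((p - q).re * T) * Real.exp (-(β * T))) := by ring
            _ = (2*M + ‖p - (a:ℂ)‖ * M * T) * Real.exp ((a - q.re) * T) := by
                rw [← Real.exp_add]
                congr 2
                rw [Complex.sub_re, hβdef]
                ring
        set δ : ℝ := q.re - a with hδdef
        have hδ : 0 < δ := by rw [hδdef]; linarith
        have hg0 : Tendsto (fun T : ℝ =>
            (2*M + ‖p - (a:ℂ)‖ * M * T) * Real.exp ((a - q.re) * T)) atTop (nhds 0) := by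
          have hδT : Tendsto (fun T : ℝ => δ * T) atTop atTop :=
            Tendsto.const_mul_atTop hδ tendsto_id
          have he1 : Tendsto (fun T : ℝ => Real.exp (-(δ * T))) atTop (nhds 0) :=
            Real.tendsto_exp_neg_atTop_nhds_zero.comp hδT
          have he2 : Tendsto (fun T : ℝ => T * Real.exp (-(δ * T))) atTop (nhds 0) := by
            have h := (Real.tendsto_pow_mul_exp_neg_atTop_nhds_zero 1).comp hδT
            have h2 := h.const_mul δ⁻¹
            rw [mul_zero] at h2
            refine h2.congr fun T => ?_
            simp only [Function.comp_apply, pow_one]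
            field_simp
          have hcomb := (he1.const_mul (2*M)).add (he2.const_mul (‖p - (a:ℂ)‖ * M))
          rw [mul_zero, mul_zero, add_zero] at hcomb
          refine hcomb.congr fun T => ?_
          rw [show (a - q.re) * T = -(δ * T) by rw [hδdef]; ring]
          ring
        refine squeeze_zero_norm' ?_ hg0
        filter_upwards [eventually_ge_atTop (max T₀ 0)] with T hT
        exact hbound T hT
    -- the main identity
    have hid : ∀ T : ℝ, 0 ≤ T →
        (∫ t in (0:ℝ)..T, ∫ s in (0:ℝ)..T,
          Complex.exp (-(lam * t) - mu * s) • c' (t + s))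
        = Complex.exp ((lam - mu) * T) • (B lam (2*T) - B lam T) - B lam T
          + mu • (k • (Complex.exp ((mu - lam) * T) • (B mu (2*T) - B mu T))
              - k • (Complex.exp ((lam - mu) * T) • (B lam (2*T) - B lam T))
              + k • B lam T - k • B mu T) := by
      intro T hT
      have hT20 : (0:ℝ) ≤ 2*T := by linarith
      have hT2 : T ≤ 2*T := by linarith
      -- inner integral computation
      have inner : ∀ t : ℝ, 0 < t →
          (∫ s in (0:ℝ)..T, Complex.exp (-(lam * t) - mu * s) • c' (t + s))
          = Complex.exp (-(ν * t)) •
              (Complex.exp (-(mu * ((t + T : ℝ) : ℂ))) • c (t + T)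
                - Complex.exp (-(mu * t)) • c t + mu • (B mu (t + T) - B mu t)) := by
        intro t ht
        have htT : (0:ℝ) < t + T := by linarith
        have htt : t ≤ t + T := by linarith
        have h1 : (∫ s in (0:ℝ)..T, Complex.exp (-(lam * t) - mu * s) • c' (t + s))
            = Complex.exp (-(ν * t)) • ∫ u in t..(t+T), Complex.exp (-(mu * u)) • c' u := by
          calc (∫ s in (0:ℝ)..T, Complex.exp (-(lam * t) - mu * s) • c' (t + s))
              = ∫ s in (0:ℝ)..T, (fun u : ℝ =>
                  Complex.exp (-(lam * t) - mu * ((u - t : ℝ) : ℂ)) • c' u) (t + s) := by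
                refine intervalIntegral.integral_congr fun s _ => ?_
                simp only [add_sub_cancel_left]
            _ = ∫ u in (t+0)..(t+T),
                  Complex.exp (-(lam * t) - mu * ((u - t : ℝ) : ℂ)) • c' u :=
                intervalIntegral.integral_comp_add_left (a := 0) (b := T)
                  (fun u : ℝ => Complex.exp (-(lam * t) - mu * ((u - t : ℝ) : ℂ)) • c' u) t
            _ = ∫ u in t..(t+T), Complex.exp (-(ν * t)) •
                  (Complex.exp (-(mu * u)) • c' u) := by
                rw [add_zero]
                refine intervalIntegral.integral_congr fun u _ => ?_
                rw [smul_smul, ← Complex.exp_add]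
                congr 2
                rw [hν]
                push_cast
                ring
            _ = Complex.exp (-(ν * t)) • ∫ u in t..(t+T),
                  Complex.exp (-(mu * u)) • c' u := intervalIntegral.integral_smul _ _
        rw [h1]
        congr 1
        have h2 := ibp_exp htt mu (hc'int t (t+T) ht htT)
          ((hcloc.integrableOn_compact_subset
              (fun x hx => le_trans ht.le hx.1 : Set.Icc t (t+T) ⊆ Set.Ici 0)
              isCompact_Icc).mono_set Set.Ioc_subset_Icc_self)
          (fun r h1 h2 => hAC t r ht h1)
        rw [h2, hBadd mu t (t+T) ht.le htT.le]
      -- replace the inner integral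
      have hDeq : (∫ t in (0:ℝ)..T, ∫ s in (0:ℝ)..T,
            Complex.exp (-(lam * t) - mu * s) • c' (t + s))
          = ∫ t in (0:ℝ)..T, Complex.exp (-(ν * t)) •
              (Complex.exp (-(mu * ((t + T : ℝ) : ℂ))) • c (t + T)
                - Complex.exp (-(mu * t)) • c t + mu • (B mu (t + T) - B mu t)) := by
        refine intervalIntegral.integral_congr_ae (Eventually.of_forall fun x hx => ?_)
        rw [Set.uIoc_of_le hT] at hx
        exact inner x hx.1
      -- integrability of the three pieces
      have hshift : IntervalIntegrable (fun x : ℝ => c (x + T)) volume 0 T := by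
        have h := (hcint T (2*T) hT hT20).comp_add_right T
        rw [sub_self, show 2*T - T = T by ring] at h
        exact h
      have hce2 : Continuous fun t : ℝ => Complex.exp (-(mu * ((t + T : ℝ) : ℂ))) := by
        fun_prop
      have if1 : IntervalIntegrable (fun t : ℝ => Complex.exp (-(ν * t)) •
          (Complex.exp (-(mu * ((t + T : ℝ) : ℂ))) • c (t + T))) volume 0 T :=
        smul_intInt (expc_cont ν) (smul_intInt hce2 hshift)
      have if2 : IntervalIntegrable (fun t : ℝ => Complex.exp (-(ν * t)) •
          (Complex.exp (-(mu * t)) • c t)) volume 0 T :=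
        smul_intInt (expc_cont ν) (smul_intInt (expc_cont mu) (hcint 0 T le_rfl hT))
      have hBmu1 : ContinuousOn (fun t : ℝ => B mu (t + T)) (Set.Icc 0 T) := by
        refine (hBcont mu).comp ((continuous_id.add continuous_const).continuousOn) ?_
        intro x hx
        exact add_nonneg hx.1 hT
      have hBmu2 : ContinuousOn (B mu) (Set.Icc 0 T) :=
        (hBcont mu).mono (fun x hx => hx.1)
      have if3 : IntervalIntegrable (fun t : ℝ => Complex.exp (-(ν * t)) •
          (mu • (B mu (t + T) - B mu t))) volume 0 T := by
        apply ContinuousOn.intervalIntegrable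
        rw [Set.uIcc_of_le hT]
        exact ((expc_cont ν).continuousOn).smul (((hBmu1.sub hBmu2)).const_smul mu)
      have ifJ1 : IntervalIntegrable (fun t : ℝ => Complex.exp (-(ν * t)) •
          B mu (t + T)) volume 0 T := by
        apply ContinuousOn.intervalIntegrable
        rw [Set.uIcc_of_le hT]
        exact ((expc_cont ν).continuousOn).smul hBmu1
      have ifJ2 : IntervalIntegrable (fun t : ℝ => Complex.exp (-(ν * t)) •
          B mu t) volume 0 T := by
        apply ContinuousOn.intervalIntegrable
        rw [Set.uIcc_of_le hT]
        exact ((expc_cont ν).continuousOn).smul hBmu2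
      -- split into three integrals
      have hDsplit : (∫ t in (0:ℝ)..T, Complex.exp (-(ν * t)) •
              (Complex.exp (-(mu * ((t + T : ℝ) : ℂ))) • c (t + T)
                - Complex.exp (-(mu * t)) • c t + mu • (B mu (t + T) - B mu t)))
          = ((∫ t in (0:ℝ)..T, Complex.exp (-(ν * t)) •
                (Complex.exp (-(mu * ((t + T : ℝ) : ℂ))) • c (t + T)))
              - ∫ t in (0:ℝ)..T, Complex.exp (-(ν * t)) •
                (Complex.exp (-(mu * t)) • c t))
            + ∫ t in (0:ℝ)..T, Complex.exp (-(ν * t)) •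
                (mu • (B mu (t + T) - B mu t)) := by
        rw [← intervalIntegral.integral_sub if1 if2,
          ← intervalIntegral.integral_add (if1.sub if2) if3]
        refine intervalIntegral.integral_congr fun t _ => ?_
        rw [smul_add, smul_sub]
      -- first piece
      have hI1 : (∫ t in (0:ℝ)..T, Complex.exp (-(ν * t)) •
            (Complex.exp (-(mu * ((t + T : ℝ) : ℂ))) • c (t + T)))
          = Complex.exp (ν * T) • (B lam (2*T) - B lam T) := by
        calc (∫ t in (0:ℝ)..T, Complex.exp (-(ν * t)) •
              (Complex.exp (-(mu * ((t + T : ℝ) : ℂ))) • c (t + T)))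
            = ∫ t in (0:ℝ)..T, (fun u : ℝ => Complex.exp (ν * T) •
                (Complex.exp (-(lam * u)) • c u)) (T + t) := by
              refine intervalIntegral.integral_congr fun t _ => ?_
              simp only
              rw [show T + t = t + T from add_comm T t, smul_smul, smul_smul,
                ← Complex.exp_add, ← Complex.exp_add]
              congr 2
              rw [hν]
              push_cast
              ring
          _ = ∫ u in (T+0)..(T+T), Complex.exp (ν * T) •
                (Complex.exp (-(lam * u)) • c u) :=
              intervalIntegral.integral_comp_add_left (a := 0) (b := T)
                (fun u : ℝ => Complex.exp (ν * T) • (Complex.exp (-(lam * u)) • c u)) T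
          _ = Complex.exp (ν * T) • ∫ u in T..(2*T), Complex.exp (-(lam * u)) • c u := by
              rw [add_zero, show T + T = 2*T by ring, intervalIntegral.integral_smul]
          _ = Complex.exp (ν * T) • (B lam (2*T) - B lam T) := by
              rw [← hBadd lam T (2*T) hT hT20]
      -- second piece
      have hI2 : (∫ t in (0:ℝ)..T, Complex.exp (-(ν * t)) •
            (Complex.exp (-(mu * t)) • c t)) = B lam T := by
        have h : (∫ t in (0:ℝ)..T, Complex.exp (-(ν * t)) •
              (Complex.exp (-(mu * t)) • c t))
            = ∫ t in (0:ℝ)..T, Complex.exp (-(lam * t)) • c t := by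
          refine intervalIntegral.integral_congr fun t _ => ?_
          rw [smul_smul, ← Complex.exp_add]
          congr 2
          rw [hν]
          ring
        rw [h]
      -- third piece
      have hJ2 : (∫ t in (0:ℝ)..T, Complex.exp (-(ν * t)) • B mu t)
          = ν⁻¹ • (B lam T - Complex.exp (-(ν * T)) • B mu T) := by
        have h := ibp_exp' hT hν0 (hgint mu 0 T le_rfl hT)
          ((hBmu2.integrableOn_compact isCompact_Icc).mono_set Set.Ioc_subset_Icc_self)
          (fun r h1 h2 => hBadd mu 0 r le_rfl h1)
        rw [h, hB0 mu]
        have h3 : (∫ r in (0:ℝ)..T, Complex.exp (-(ν * r)) •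
              (Complex.exp (-(mu * r)) • c r)) = B lam T := by
          refine intervalIntegral.integral_congr fun r _ => ?_
          rw [smul_smul, ← Complex.exp_add]
          congr 2
          rw [hν]
          ring
        rw [h3]
        congr 1
        rw [smul_zero]
        abel
      have hJ1 : (∫ t in (0:ℝ)..T, Complex.exp (-(ν * t)) • B mu (t + T))
          = Complex.exp (ν * T) • (ν⁻¹ • (Complex.exp (-(ν * T)) • B mu T
              - Complex.exp (-(ν * ((2*T : ℝ) : ℂ))) • B mu (2*T)
              + (B lam (2*T) - B lam T))) := by
        have hcalc : (∫ t in (0:ℝ)..T, Complex.exp (-(ν * t)) • B mu (t + T))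
            = Complex.exp (ν * T) • ∫ u in T..(2*T), Complex.exp (-(ν * u)) • B mu u := by
          calc (∫ t in (0:ℝ)..T, Complex.exp (-(ν * t)) • B mu (t + T))
              = ∫ t in (0:ℝ)..T, (fun u : ℝ => Complex.exp (ν * T) •
                  (Complex.exp (-(ν * u)) • B mu u)) (T + t) := by
                refine intervalIntegral.integral_congr fun t _ => ?_
                simp only
                rw [show T + t = t + T from add_comm T t, smul_smul,
                  ← Complex.exp_add]
                congr 2
                push_cast
                ring
            _ = ∫ u in (T+0)..(T+T), Complex.exp (ν * T) •
                  (Complex.exp (-(ν * u)) • B mu u) :=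
                intervalIntegral.integral_comp_add_left (a := 0) (b := T)
                  (fun u : ℝ => Complex.exp (ν * T) • (Complex.exp (-(ν * u)) • B mu u)) T
            _ = Complex.exp (ν * T) • ∫ u in T..(2*T),
                  Complex.exp (-(ν * u)) • B mu u := by
                rw [add_zero, show T + T = 2*T by ring, intervalIntegral.integral_smul]
        rw [hcalc]
        congr 1
        have hBmu3 : ContinuousOn (B mu) (Set.Icc T (2*T)) :=
          (hBcont mu).mono (fun x hx => le_trans hT hx.1)
        have h := ibp_exp' hT2 hν0 (hgint mu T (2*T) hT hT20)
          ((hBmu3.integrableOn_compact isCompact_Icc).mono_set Set.Ioc_subset_Icc_self)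
          (fun r h1 h2 => hBadd mu T r hT (le_trans hT h1))
        rw [h]
        have h3 : (∫ r in T..(2*T), Complex.exp (-(ν * r)) •
              (Complex.exp (-(mu * r)) • c r)) = B lam (2*T) - B lam T := by
          rw [hBadd lam T (2*T) hT hT20]
          refine intervalIntegral.integral_congr fun r _ => ?_
          rw [smul_smul, ← Complex.exp_add]
          congr 2
          rw [hν]
          ring
        rw [h3]
      have hI3 : (∫ t in (0:ℝ)..T, Complex.exp (-(ν * t)) •
            (mu • (B mu (t + T) - B mu t)))
          = mu • ((∫ t in (0:ℝ)..T, Complex.exp (-(ν * t)) • B mu (t + T))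
              - ∫ t in (0:ℝ)..T, Complex.exp (-(ν * t)) • B mu t) := by
        rw [← intervalIntegral.integral_sub ifJ1 ifJ2, ← intervalIntegral.integral_smul]
        refine intervalIntegral.integral_congr fun t _ => ?_
        rw [smul_comm (Complex.exp (-(ν * (t:ℂ)))) mu, smul_sub]
      -- assemble
      rw [hDeq, hDsplit, hI1, hI2, hI3, hJ1, hJ2]
      -- express everything in terms of E := exp (ν * T)
      have hsub : lam - mu ≠ 0 := sub_ne_zero.2 hne
      have hsub' : mu - lam ≠ 0 := sub_ne_zero.2 (Ne.symm hne)
      have hE : Complex.exp (ν * T) ≠ 0 := Complex.exp_ne_zero _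
      have e1 : Complex.exp (-(ν * T)) = (Complex.exp (ν * T))⁻¹ :=
        Complex.exp_neg _
      have e2 : Complex.exp (-(ν * ((2*T : ℝ) : ℂ)))
          = (Complex.exp (ν * T))⁻¹ * (Complex.exp (ν * T))⁻¹ := by
        rw [← Complex.exp_neg, ← Complex.exp_add]
        congr 1
        push_cast
        ring
      have e3 : Complex.exp ((lam - mu) * T) = Complex.exp (ν * T) := by rw [← hν]
      have e4 : Complex.exp ((mu - lam) * T) = (Complex.exp (ν * T))⁻¹ := by
        rw [← Complex.exp_neg]
        congr 1
        rw [hν]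
        ring
      rw [e1, e2, e3, e4, hk, hν]
      match_scalars <;> field_simp <;> ring
    -- pass to the limit
    have hlim : Tendsto (fun T : ℝ =>
        Complex.exp ((lam - mu) * T) • (B lam (2*T) - B lam T) - B lam T
          + mu • (k • (Complex.exp ((mu - lam) * T) • (B mu (2*T) - B mu T))
              - k • (Complex.exp ((lam - mu) * T) • (B lam (2*T) - B lam T))
              + k • B lam T - k • B mu T)) atTop
        (nhds ((0:X) - C lam + mu • (k • (0:X) - k • (0:X) + k • C lam - k • C mu))) := by
      have t1 := tail lam mu hl hm
      have t2 := tail mu lam hm hl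
      have t3 : Tendsto (fun T => B lam T) atTop (nhds (C lam)) := hc lam hl
      have t4 : Tendsto (fun T => B mu T) atTop (nhds (C mu)) := hc mu hm
      exact (t1.sub t3).add
        (((((t2.const_smul k).sub (t1.const_smul k)).add (t3.const_smul k)).sub
          (t4.const_smul k)).const_smul mu)
    have hGeq : G lam mu
        = (0:X) - C lam + mu • (k • (0:X) - k • (0:X) + k • C lam - k • C mu) := by
      refine tendsto_nhds_unique (hG lam mu hl₁ hm₂) (hlim.congr' ?_)
      filter_upwards [eventually_ge_atTop (0:ℝ)] with T hT
      exact (hid T hT).symm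
    rw [hGeq, hk]
    have hml : mu - lam ≠ 0 := sub_ne_zero.2 (Ne.symm hne)
    match_scalars <;> field_simp <;> ring
end
end

section
/- Let 0 < α < 1. Then for all t, s > 0, (α·sin(απ)/π) · ∫₀^t ∫₀^s r₁^{α−1} r₂^{α−1} (t+s−r₁−r₂)^{−α−1} dr₂ dr₁ = (t+s)^{α−1}. Equivalently, writing g_β(t) = t^{β−1}/Γ(β), one has g_α(t+s) = −∫₀^t ∫₀^s g_{−α}(t+s−r₁−r₂) g_α(r₁) g_α(r₂) dr₂ dr₁. -/
open MeasureTheory Filter Set Topology Real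

noncomputable section

/-- The Riemann–Liouville kernel `g_β(t) = t^{β−1}/Γ(β)`. -/
def gfun (β : ℝ) (t : ℝ) : ℝ := t ^ (β - 1) / Real.Gamma β


lemma beta_refl (α : ℝ) (hα : 0 < α) (hα1 : α < 1) :
    ∫ x in (0:ℝ)..1, x ^ (α - 1) * (1 - x) ^ (-α) = π / Real.sin (π * α) := by
  have h1 : (0:ℝ) < 1 - α := by linarith
  have hc := Complex.Gamma_mul_Gamma_eq_betaIntegral
    (s := (α:ℂ)) (t := ((1 - α : ℝ):ℂ)) (by simpa using hα) (by simpa using h1)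
  rw [Complex.betaIntegral] at hc
  have hint : (∫ x in (0:ℝ)..1, (x:ℂ) ^ ((α:ℂ) - 1) * ((1:ℂ) - x) ^ (((1-α:ℝ):ℂ) - 1))
      = ((∫ x in (0:ℝ)..1, x ^ (α - 1) * (1 - x) ^ (-α) : ℝ) : ℂ) := by
    rw [← intervalIntegral.integral_ofReal]
    apply intervalIntegral.integral_congr
    intro x hx
    rw [Set.uIcc_of_le (by norm_num : (0:ℝ) ≤ 1)] at hx
    push_cast
    rw [Complex.ofReal_cpow hx.1, Complex.ofReal_cpow (by linarith [hx.2])]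
    push_cast
    ring_nf
  rw [hint, Complex.Gamma_ofReal, (by push_cast; ring : (α:ℂ) + ((1-α:ℝ):ℂ) = ((1:ℝ):ℂ)),
    Complex.Gamma_ofReal, Complex.Gamma_ofReal] at hc
  have hr : Real.Gamma α * Real.Gamma (1 - α)
      = Real.Gamma 1 * ∫ x in (0:ℝ)..1, x ^ (α - 1) * (1 - x) ^ (-α) := by exact_mod_cast hc
  rw [Real.Gamma_one, one_mul] at hr
  rw [← hr, Real.Gamma_mul_Gamma_one_sub]

lemma inner_int (α a s : ℝ) (hα : 0 < α) (hα1 : α < 1) (hs : 0 < s) (hsa : s < a) :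
    ∫ r in (0:ℝ)..s, r ^ (α - 1) * (a - r) ^ (-α - 1)
      = s ^ α * (a - s) ^ (-α) / (α * a) := by
  have ha : 0 < a := hs.trans hsa
  set F : ℝ → ℝ := fun r => r ^ α * (a - r) ^ (-α) / (α * a) with hF
  have key : ∫ r in (0:ℝ)..s, r ^ (α - 1) * (a - r) ^ (-α - 1) = F s - F 0 := by
    apply intervalIntegral.integral_eq_sub_of_hasDeriv_right_of_le hs.le
    · apply ContinuousOn.div_const
      apply ContinuousOn.mul
      · intro x hx
        exact (Real.continuousAt_rpow_const x α (Or.inr hα.le)).continuousWithinAt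
      · intro x hx
        exact ((Real.continuousAt_rpow_const (a - x) (-α)
          (Or.inl (by simp only [Set.mem_Icc] at hx; nlinarith))).comp
          (by fun_prop)).continuousWithinAt
    · intro x hx
      have hx0 : 0 < x := hx.1
      have hax : 0 < a - x := by linarith [hx.2]
      have d1 : HasDerivAt (fun r : ℝ => r ^ α) (α * x ^ (α - 1)) x :=
        Real.hasDerivAt_rpow_const (Or.inl hx0.ne')
      have d2 : HasDerivAt (fun r : ℝ => (a - r) ^ (-α)) (α * (a - x) ^ (-α - 1)) x := by
        have h0 : HasDerivAt (fun r : ℝ => a - r) (-1) x := by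
          simpa using (hasDerivAt_id x).const_sub a
        have := (Real.hasDerivAt_rpow_const (p := -α) (Or.inl hax.ne')).comp x h0
        refine this.congr_deriv (Eq.symm ?_)
        ring
      have d3 : HasDerivAt F (x ^ (α - 1) * (a - x) ^ (-α - 1)) x := by
        have h := ((d1.mul d2).div_const (α * a))
        refine h.congr_deriv (Eq.symm ?_)
        have e1 : x ^ α = x * x ^ (α - 1) := by
          rw [show α = 1 + (α - 1) by ring, Real.rpow_add hx0, Real.rpow_one]
          ring_nf
        have e2 : (a - x) ^ (-α) = (a - x) * (a - x) ^ (-α - 1) := by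
          rw [show -α = 1 + (-α - 1) by ring, Real.rpow_add hax, Real.rpow_one]
          ring_nf
        rw [e1, e2]
        field_simp
        ring
      exact d3.hasDerivWithinAt
    · apply IntervalIntegrable.mul_continuousOn
      · exact intervalIntegral.intervalIntegrable_rpow' (by linarith)
      · intro x hx
        rw [Set.uIcc_of_le hs.le] at hx
        exact ((Real.continuousAt_rpow_const (a - x) (-α - 1)
          (Or.inl (by nlinarith [hx.1, hx.2]))).comp (by fun_prop)).continuousWithinAt
  rw [key, hF]
  simp only
  rw [Real.zero_rpow hα.ne', zero_mul, zero_div, sub_zero]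

lemma point_alg (α t s w : ℝ) (hα : 0 < α) (hα1 : α < 1) (ht : 0 < t) (hs : 0 < s)
    (hw : w ∈ Set.Ioo (0:ℝ) 1) :
    |t * (s + t) * s / (s + t * w) ^ 2| *
      ((t * (s + t) * w / (s + t * w)) ^ (α - 1)
        * (t - t * (s + t) * w / (s + t * w)) ^ (-α)
        / (t + s - t * (s + t) * w / (s + t * w)))
      = (t + s) ^ (α - 1) * s ^ (-α) * (w ^ (α - 1) * (1 - w) ^ (-α)) := by
  obtain ⟨hw0, hw1⟩ := hw
  have hst : 0 < s + t := by linarith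
  have hA : 0 < s + t * w := by nlinarith
  have h1w : 0 < 1 - w := by linarith
  rw [show t - t * (s + t) * w / (s + t * w) = t * s * (1 - w) / (s + t * w) by
        field_simp; ring,
      show t + s - t * (s + t) * w / (s + t * w) = (s + t) * s / (s + t * w) by
        field_simp; ring,
      abs_of_pos (by positivity)]
  rw [Real.div_rpow (by positivity) hA.le, Real.mul_rpow (by positivity) hw0.le,
      Real.mul_rpow ht.le hst.le,
      Real.div_rpow (by positivity) hA.le, Real.mul_rpow (by positivity) h1w.le,
      Real.mul_rpow ht.le hs.le]
  have e2 : t ^ (-α) = 1 / (t * t ^ (α - 1)) := by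
    rw [show -α = -(1 + (α - 1)) by ring, Real.rpow_neg ht.le, Real.rpow_add ht,
      Real.rpow_one, one_div]
  have eA : (s + t * w) ^ (-α) = 1 / ((s + t * w) * (s + t * w) ^ (α - 1)) := by
    rw [show -α = -(1 + (α - 1)) by ring, Real.rpow_neg hA.le, Real.rpow_add hA,
      Real.rpow_one, one_div]
  rw [e2, eA, show t + s = s + t by ring]
  have p1 : (0:ℝ) < t ^ (α - 1) := Real.rpow_pos_of_pos ht _
  have p2 : (0:ℝ) < (s + t * w) ^ (α - 1) := Real.rpow_pos_of_pos hA _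
  field_simp

lemma subst_int (α t s : ℝ) (hα : 0 < α) (hα1 : α < 1) (ht : 0 < t) (hs : 0 < s) :
    ∫ r in Set.Ioo (0:ℝ) t, r ^ (α - 1) * (t - r) ^ (-α) / (t + s - r)
      = (t + s) ^ (α - 1) * s ^ (-α) * ∫ w in Set.Ioo (0:ℝ) 1, w ^ (α - 1) * (1 - w) ^ (-α) := by
  have hst : 0 < s + t := by linarith
  set ψ : ℝ → ℝ := fun w => t * (s + t) * w / (s + t * w) with hψ
  set ψ' : ℝ → ℝ := fun w => t * (s + t) * s / (s + t * w) ^ 2 with hψ'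
  have hApos : ∀ w : ℝ, 0 ≤ w → 0 < s + t * w := fun w hw => by nlinarith
  have hderiv : ∀ w ∈ Set.Ioo (0:ℝ) 1, HasDerivWithinAt ψ (ψ' w) (Set.Ioo (0:ℝ) 1) w := by
    intro w hw
    have hA := hApos w hw.1.le
    have d : HasDerivAt ψ (ψ' w) w := by
      have h1 : HasDerivAt (fun w : ℝ => t * (s + t) * w) (t * (s + t)) w := by
        simpa using (hasDerivAt_id w).const_mul (t * (s + t))
      have h2 : HasDerivAt (fun w : ℝ => s + t * w) t w := by
        simpa using ((hasDerivAt_id w).const_mul t).const_add s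
      have := h1.div h2 hA.ne'
      refine this.congr_deriv (Eq.symm ?_)
      rw [hψ']
      congr 1
      ring
    exact d.hasDerivWithinAt
  have hinj : Set.InjOn ψ (Set.Ioo (0:ℝ) 1) := by
    intro w1 h1 w2 h2 h
    have hA1 := hApos w1 h1.1.le
    have hA2 := hApos w2 h2.1.le
    rw [hψ] at h
    simp only at h
    rw [div_eq_div_iff hA1.ne' hA2.ne'] at h
    have h3 : t * (s + t) * s * w1 = t * (s + t) * s * w2 := by linear_combination h
    exact mul_left_cancel₀ (by positivity) h3
  have himg : ψ '' Set.Ioo (0:ℝ) 1 = Set.Ioo (0:ℝ) t := by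
    apply Set.Subset.antisymm
    · rintro _ ⟨w, hw, rfl⟩
      have hA := hApos w hw.1.le
      refine ⟨div_pos (mul_pos (mul_pos ht hst) hw.1) hA, ?_⟩
      rw [div_lt_iff₀ hA]
      nlinarith [mul_pos (mul_pos ht hs) (sub_pos.mpr hw.2)]
    · have hcont : ContinuousOn ψ (Set.Icc (0:ℝ) 1) := by
        apply ContinuousOn.div
        · fun_prop
        · fun_prop
        · intro w hw
          exact (hApos w hw.1).ne'
      have := intermediate_value_Ioo (by norm_num : (0:ℝ) ≤ 1) hcont
      have e0 : ψ 0 = 0 := by simp [hψ]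
      have e1 : ψ 1 = t := by
        rw [hψ]
        simp only [mul_one]
        field_simp
      rw [e0, e1] at this
      exact this
  have key := MeasureTheory.integral_image_eq_integral_abs_deriv_smul measurableSet_Ioo
    hderiv hinj (fun r => r ^ (α - 1) * (t - r) ^ (-α) / (t + s - r))
  rw [himg] at key
  rw [key, ← MeasureTheory.integral_const_mul]
  apply MeasureTheory.setIntegral_congr_fun measurableSet_Ioo
  intro w hw
  simp only [smul_eq_mul]
  exact point_alg α t s w hα hα1 ht hs hw

lemma I_val (α t s : ℝ) (hα : 0 < α) (hα1 : α < 1) (ht : 0 < t) (hs : 0 < s) :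
    (∫ r₁ in (0:ℝ)..t, ∫ r₂ in (0:ℝ)..s,
        r₁ ^ (α - 1) * r₂ ^ (α - 1) * (t + s - r₁ - r₂) ^ (-α - 1))
      = (t + s) ^ (α - 1) * (π / (α * Real.sin (π * α))) := by
  have hsin : 0 < Real.sin (π * α) := by
    apply Real.sin_pos_of_pos_of_lt_pi
    · positivity
    · nlinarith [Real.pi_pos]
  have step1 : (∫ r₁ in (0:ℝ)..t, ∫ r₂ in (0:ℝ)..s,
        r₁ ^ (α - 1) * r₂ ^ (α - 1) * (t + s - r₁ - r₂) ^ (-α - 1))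
      = ∫ r₁ in (0:ℝ)..t, (s ^ α / α) * (r₁ ^ (α - 1) * (t - r₁) ^ (-α) / (t + s - r₁)) := by
    apply intervalIntegral.integral_congr_ae
    have hne : ∀ᵐ x : ℝ, x ≠ t := by
      refine ae_iff.2 ?_
      simp [Real.volume_singleton]
    filter_upwards [hne] with x hx hmem
    rw [Set.uIoc_of_le ht.le] at hmem
    have hx0 : 0 < x := hmem.1
    have hxt : x < t := lt_of_le_of_ne hmem.2 hx
    simp_rw [mul_assoc]
    rw [intervalIntegral.integral_const_mul,
      inner_int α (t + s - x) s hα hα1 hs (by linarith)]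
    rw [show t + s - x - s = t - x by ring]
    have h1 : α ≠ 0 := hα.ne'
    have h2 : t + s - x ≠ 0 := by intro h; nlinarith
    field_simp
  rw [step1, intervalIntegral.integral_const_mul, intervalIntegral.integral_of_le ht.le,
    MeasureTheory.integral_Ioc_eq_integral_Ioo, subst_int α t s hα hα1 ht hs]
  have hB : (∫ w in Set.Ioo (0:ℝ) 1, w ^ (α - 1) * (1 - w) ^ (-α))
      = π / Real.sin (π * α) := by
    rw [← MeasureTheory.integral_Ioc_eq_integral_Ioo,
      ← intervalIntegral.integral_of_le (by norm_num : (0:ℝ) ≤ 1)]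
    exact beta_refl α hα hα1
  rw [hB]
  have hss : s ^ α * s ^ (-α) = 1 := by
    rw [← Real.rpow_add hs]; norm_num
  linear_combination ((t + s) ^ (α - 1) * π / (α * Real.sin (π * α))) * hss

/-- For `0 < α < 1` and `t, s > 0`:
`(α·sin(απ)/π) ∫₀^t ∫₀^s r₁^{α−1} r₂^{α−1} (t+s−r₁−r₂)^{−α−1} dr₂ dr₁ = (t+s)^{α−1}`,
equivalently `g_α(t+s) = −∫₀^t ∫₀^s g_{−α}(t+s−r₁−r₂) g_α(r₁) g_α(r₂) dr₂ dr₁`. -/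
theorem galpha_plus_identity (α : ℝ) (hα : 0 < α) (hα1 : α < 1)
    (t s : ℝ) (ht : 0 < t) (hs : 0 < s) :
    (α * Real.sin (α * π) / π) *
        (∫ r₁ in (0:ℝ)..t, ∫ r₂ in (0:ℝ)..s,
          r₁ ^ (α - 1) * r₂ ^ (α - 1) * (t + s - r₁ - r₂) ^ (-α - 1))
      = (t + s) ^ (α - 1)
    ∧
    gfun α (t + s)
      = -∫ r₁ in (0:ℝ)..t, ∫ r₂ in (0:ℝ)..s,
          gfun (-α) (t + s - r₁ - r₂) * gfun α r₁ * gfun α r₂ := by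
  have hsin : 0 < Real.sin (π * α) := by
    apply Real.sin_pos_of_pos_of_lt_pi
    · positivity
    · nlinarith [Real.pi_pos]
  have hI := I_val α t s hα hα1 ht hs
  have hsin' : Real.sin (α * π) ≠ 0 := by rw [mul_comm]; exact hsin.ne'
  have hX : (0:ℝ) < (t + s) ^ (α - 1) := Real.rpow_pos_of_pos (by linarith) _
  constructor
  · rw [show α * π = π * α from mul_comm α π, hI]
    field_simp
  · have hGa : 0 < Real.Gamma α := Real.Gamma_pos_of_pos hα
    have hG1a : 0 < Real.Gamma (1 - α) := Real.Gamma_pos_of_pos (by linarith)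
    have h2 : Real.Gamma (1 - α) = -α * Real.Gamma (-α) := by
      have := Real.Gamma_add_one (s := -α) (by simpa using hα.ne')
      rw [show -α + 1 = 1 - α by ring] at this
      exact this
    have hGneg : Real.Gamma (-α) ≠ 0 := by
      intro h
      rw [h, mul_zero] at h2
      exact hG1a.ne' h2
    have key : Real.Gamma α * (-α * Real.Gamma (-α)) * Real.sin (π * α) = π := by
      have h3 := Real.Gamma_mul_Gamma_one_sub α
      rw [h2] at h3
      rw [eq_div_iff hsin.ne'] at h3
      exact h3
    have hC : ∀ r₁ r₂ : ℝ, gfun (-α) (t + s - r₁ - r₂) * gfun α r₁ * gfun α r₂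
        = (Real.Gamma (-α) * Real.Gamma α * Real.Gamma α)⁻¹ *
          (r₁ ^ (α - 1) * r₂ ^ (α - 1) * (t + s - r₁ - r₂) ^ (-α - 1)) := by
      intro r₁ r₂
      simp only [gfun]
      ring
    simp_rw [hC, intervalIntegral.integral_const_mul]
    rw [hI, gfun]
    field_simp
    linear_combination (-1 : ℝ) * key
      + (α * Real.Gamma α * Real.Gamma (-α)) * congrArg Real.sin (mul_comm α π)
end
end
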